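/- arXiv:1909.11880 — 6 statements merged into one kernel-verified Lean document; each statement's English description precedes it below -/
import Mathlib

section
/- The infinite word W contains no occurrence of the word 11 and no occurrence of the word 0000; that is, for every position i, it is not the case that W(i) = W(i+1) = 1, and it is not the case that W(i) = W(i+1) = W(i+2) = W(i+3) = 0. -/
open Filter

/-- The Chacón words: `W₀ = 0`, `W_{n+1} = Wₙ Wₙ 1 Wₙ`. -/
def chaconWord : ℕ → List (Fin 2)
  | 0 => [0]
  | n + 1 => chaconWord n ++ chaconWord n ++ [1] ++ chaconWord n

/-- `W` is the infinite word having every `Wₙ` as an initial segment. -/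
def IsChaconInfWord (W : ℕ → Fin 2) : Prop :=
  ∀ n i, i < (chaconWord n).length → W i = (chaconWord n).getD i 0

/-- A finite word `α` occurs in a finite word `β` at position `j`. -/
def OccursAt (α β : List (Fin 2)) (j : ℕ) : Prop :=
  j + α.length ≤ β.length ∧ ∀ k < α.length, β.getD (j + k) 0 = α.getD k 0

/-- A finite word `α` occurs in the infinite word `W` at position `j`. -/
def OccursAtInf (W : ℕ → Fin 2) (α : List (Fin 2)) (j : ℕ) : Prop :=
  ∀ k < α.length, W (j + k) = α.getD k 0

/-- The subword of the infinite word `W` of length `L` beginning at position `i`. -/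
def subword (W : ℕ → Fin 2) (i L : ℕ) : List (Fin 2) :=
  (List.range L).map fun k => W (i + k)

/-- The (normalized) Hamming distance `d` of two finite words. -/
noncomputable def hamming (α β : List (Fin 2)) : ℝ :=
  (((Finset.range α.length).filter fun i => α.getD i 0 ≠ β.getD i 0).card : ℝ) / α.length

/-- The modified 0-Hamming distance `d₀` of two finite words. -/
noncomputable def hamming0 (α β : List (Fin 2)) : ℝ :=
  (((Finset.range α.length).filter fun i => α.getD i 0 = 0 ∧ β.getD i 0 = 1).card : ℝ) /
    (((Finset.range α.length).filter fun i => α.getD i 0 = 0).card : ℝ)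


lemma chacon_len_lt (n : ℕ) : n < (chaconWord n).length := by
  induction n with
  | zero => simp [chaconWord]
  | succ n ih => simp only [chaconWord, List.length_append, List.length_singleton]; omega

lemma chacon_len_succ (n : ℕ) :
    (chaconWord (n+1)).length = 3 * (chaconWord n).length + 1 := by
  show (chaconWord n ++ chaconWord n ++ [1] ++ chaconWord n).length = _
  simp only [List.length_append, List.length_singleton]
  omega

lemma chacon_len_gt3 (n : ℕ) : 3 < (chaconWord (n+1)).length := by
  induction n with
  | zero => decide
  | succ n ih => rw [chacon_len_succ]; omega

lemma chacon_getD (n i : ℕ) :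
    (chaconWord (n+1)).getD i 0 =
      if i < (chaconWord n).length then (chaconWord n).getD i 0
      else if i < 2 * (chaconWord n).length then (chaconWord n).getD (i - (chaconWord n).length) 0
      else if i = 2 * (chaconWord n).length then 1
      else (chaconWord n).getD (i - (2 * (chaconWord n).length + 1)) 0 := by
  have h2L : (chaconWord n ++ chaconWord n).length = 2 * (chaconWord n).length := by
    simp only [List.length_append]; omega
  have h2L1 : (chaconWord n ++ chaconWord n ++ [1]).length = 2 * (chaconWord n).length + 1 := by
    simp only [List.length_append, List.length_singleton]; omega
  show (chaconWord n ++ chaconWord n ++ [1] ++ chaconWord n).getD i 0 = _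
  rcases lt_or_ge i (chaconWord n).length with h1 | h1
  · rw [if_pos h1, List.getD_append _ _ _ _ (by omega),
      List.getD_append _ _ _ _ (by omega), List.getD_append _ _ _ _ h1]
  rcases lt_or_ge i (2 * (chaconWord n).length) with h2 | h2
  · rw [if_neg (by omega), if_pos h2, List.getD_append _ _ _ _ (by omega),
      List.getD_append _ _ _ _ (by omega),
      List.getD_append_right _ _ _ _ (by omega : (chaconWord n).length ≤ i)]
  rcases eq_or_lt_of_le h2 with h3 | h3
  · rw [if_neg (by omega), if_neg (by omega), if_pos h3.symm,
      List.getD_append _ _ _ _ (by omega),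
      List.getD_append_right _ _ _ _ (by omega : (chaconWord n ++ chaconWord n).length ≤ i)]
    have : i - (chaconWord n ++ chaconWord n).length = 0 := by omega
    rw [this]; rfl
  · rw [if_neg (by omega), if_neg (by omega), if_neg (by omega),
      List.getD_append_right _ _ _ _
        (by omega : (chaconWord n ++ chaconWord n ++ [1]).length ≤ i)]
    congr 1
    omega

lemma chacon_first3 (n : ℕ) :
    (chaconWord (n+1)).getD 0 0 = 0 ∧ (chaconWord (n+1)).getD 1 0 = 0 ∧
      (chaconWord (n+1)).getD 2 0 = 1 := by
  induction n with
  | zero => refine ⟨rfl, rfl, rfl⟩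
  | succ n ih =>
    have hL := chacon_len_gt3 n
    refine ⟨?_, ?_, ?_⟩ <;> rw [chacon_getD, if_pos (by omega)]
    · exact ih.1
    · exact ih.2.1
    · exact ih.2.2

lemma chacon_last2 (n : ℕ) :
    (chaconWord (n+1)).getD ((chaconWord (n+1)).length - 2) 0 = 1 ∧
      (chaconWord (n+1)).getD ((chaconWord (n+1)).length - 1) 0 = 0 := by
  induction n with
  | zero => exact ⟨rfl, rfl⟩
  | succ n ih =>
    have hL := chacon_len_gt3 n
    have hlen := chacon_len_succ (n+1)
    rw [hlen]
    constructor
    · rw [chacon_getD, if_neg (by omega), if_neg (by omega), if_neg (by omega)]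
      have : 3 * (chaconWord (n+1)).length + 1 - 2 - (2 * (chaconWord (n+1)).length + 1)
          = (chaconWord (n+1)).length - 2 := by omega
      rw [this]; exact ih.1
    · rw [chacon_getD, if_neg (by omega), if_neg (by omega), if_neg (by omega)]
      have : 3 * (chaconWord (n+1)).length + 1 - 1 - (2 * (chaconWord (n+1)).length + 1)
          = (chaconWord (n+1)).length - 1 := by omega
      rw [this]; exact ih.2

def NoBad (l : List (Fin 2)) : Prop :=
  (∀ j, j + 2 ≤ l.length → ¬ (l.getD j 0 = 1 ∧ l.getD (j+1) 0 = 1)) ∧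
  (∀ j, j + 4 ≤ l.length →
    ¬ (l.getD j 0 = 0 ∧ l.getD (j+1) 0 = 0 ∧ l.getD (j+2) 0 = 0 ∧ l.getD (j+3) 0 = 0))

lemma chacon_noBad (n : ℕ) : NoBad (chaconWord (n+1)) := by
  induction n with
  | zero =>
    constructor
    · intro j hj
      have hlen : (chaconWord 1).length = 4 := rfl
      rw [hlen] at hj
      have : j ≤ 2 := by omega
      interval_cases j <;> decide
    · intro j hj
      have hlen : (chaconWord 1).length = 4 := rfl
      rw [hlen] at hj
      have : j = 0 := by omega
      subst this; decide
  | succ n ih =>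
    have hL4 : 3 < (chaconWord (n+1)).length := chacon_len_gt3 n
    have hlen := chacon_len_succ (n+1)
    have hget := chacon_getD (n+1)
    have hlast := chacon_last2 n
    have hfirst := chacon_first3 n
    constructor
    · intro j hj ⟨e1, e2⟩
      rw [hlen] at hj
      rw [hget] at e1 e2
      rcases lt_or_ge (j+1) (chaconWord (n+1)).length with h | h
      · rw [if_pos (by omega)] at e1
        rw [if_pos h] at e2
        exact ih.1 j (by omega) ⟨e1, e2⟩
      rcases eq_or_lt_of_le h with h' | h'
      · rw [if_pos (by omega)] at e1
        have hje : j = (chaconWord (n+1)).length - 1 := by omega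
        rw [hje, hlast.2] at e1
        exact absurd e1 (by decide)
      rcases lt_or_ge (j+1) (2 * (chaconWord (n+1)).length) with h2 | h2
      · rw [if_neg (by omega), if_pos (by omega)] at e1
        rw [if_neg (by omega), if_pos h2] at e2
        have hj1 : j + 1 - (chaconWord (n+1)).length = (j - (chaconWord (n+1)).length) + 1 := by
          omega
        rw [hj1] at e2
        exact ih.1 (j - (chaconWord (n+1)).length) (by omega) ⟨e1, e2⟩
      rcases eq_or_lt_of_le h2 with h2' | h2'
      · rw [if_neg (by omega), if_pos (by omega)] at e1
        have hje : j - (chaconWord (n+1)).length = (chaconWord (n+1)).length - 1 := by omega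
        rw [hje, hlast.2] at e1
        exact absurd e1 (by decide)
      rcases Nat.lt_or_ge j (2 * (chaconWord (n+1)).length + 1) with h3 | h3
      · rw [if_neg (by omega), if_neg (by omega), if_neg (by omega)] at e2
        have hje : j + 1 - (2 * (chaconWord (n+1)).length + 1) = 0 := by omega
        rw [hje, hfirst.1] at e2
        exact absurd e2 (by decide)
      · rw [if_neg (by omega), if_neg (by omega), if_neg (by omega)] at e1
        rw [if_neg (by omega), if_neg (by omega), if_neg (by omega)] at e2
        have hj1 : j + 1 - (2 * (chaconWord (n+1)).length + 1)
            = (j - (2 * (chaconWord (n+1)).length + 1)) + 1 := by omega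
        rw [hj1] at e2
        exact ih.1 (j - (2 * (chaconWord (n+1)).length + 1)) (by omega) ⟨e1, e2⟩
    · intro j hj ⟨e0, e1, e2, e3⟩
      rw [hlen] at hj
      rw [hget] at e0 e1 e2 e3
      rcases le_or_gt (j + 4) (chaconWord (n+1)).length with h | h
      · rw [if_pos (by omega)] at e0 e1 e2 e3
        exact ih.2 j (by omega) ⟨e0, e1, e2, e3⟩
      rcases le_or_gt j ((chaconWord (n+1)).length - 1) with h1 | h1
      · rcases le_or_gt j ((chaconWord (n+1)).length - 2) with hj2 | hj2
        · have hd : (chaconWord (n+1)).length - 2 = j ∨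
              (chaconWord (n+1)).length - 2 = j + 1 := by omega
          rcases hd with hd | hd
          · rw [← hd, if_pos (by omega), hlast.1] at e0
            exact absurd e0 (by decide)
          · rw [← hd, if_pos (by omega), hlast.1] at e1
            exact absurd e1 (by decide)
        · have hd : j + 3 = (chaconWord (n+1)).length + 2 := by omega
          rw [hd, if_neg (by omega), if_pos (by omega)] at e3
          have : (chaconWord (n+1)).length + 2 - (chaconWord (n+1)).length = 2 := by omega
          rw [this, hfirst.2.2] at e3
          exact absurd e3 (by decide)
      rcases le_or_gt (j + 4) (2 * (chaconWord (n+1)).length) with h2 | h2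
      · rw [if_neg (by omega), if_pos (by omega)] at e0 e1 e2 e3
        have c1 : j + 1 - (chaconWord (n+1)).length = (j - (chaconWord (n+1)).length) + 1 := by
          omega
        have c2 : j + 2 - (chaconWord (n+1)).length = (j - (chaconWord (n+1)).length) + 2 := by
          omega
        have c3 : j + 3 - (chaconWord (n+1)).length = (j - (chaconWord (n+1)).length) + 3 := by
          omega
        rw [c1] at e1; rw [c2] at e2; rw [c3] at e3
        exact ih.2 (j - (chaconWord (n+1)).length) (by omega) ⟨e0, e1, e2, e3⟩
      rcases le_or_gt j (2 * (chaconWord (n+1)).length) with h3 | h3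
      · have hd : 2 * (chaconWord (n+1)).length = j ∨ 2 * (chaconWord (n+1)).length = j+1 ∨
            2 * (chaconWord (n+1)).length = j+2 ∨ 2 * (chaconWord (n+1)).length = j+3 := by omega
        rcases hd with hd | hd | hd | hd
        · rw [← hd, if_neg (by omega), if_neg (by omega), if_pos rfl] at e0
          exact absurd e0 (by decide)
        · rw [← hd, if_neg (by omega), if_neg (by omega), if_pos rfl] at e1
          exact absurd e1 (by decide)
        · rw [← hd, if_neg (by omega), if_neg (by omega), if_pos rfl] at e2
          exact absurd e2 (by decide)
        · rw [← hd, if_neg (by omega), if_neg (by omega), if_pos rfl] at e3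
          exact absurd e3 (by decide)
      · rw [if_neg (by omega), if_neg (by omega), if_neg (by omega)] at e0 e1 e2 e3
        have c1 : j + 1 - (2 * (chaconWord (n+1)).length + 1)
            = (j - (2 * (chaconWord (n+1)).length + 1)) + 1 := by omega
        have c2 : j + 2 - (2 * (chaconWord (n+1)).length + 1)
            = (j - (2 * (chaconWord (n+1)).length + 1)) + 2 := by omega
        have c3 : j + 3 - (2 * (chaconWord (n+1)).length + 1)
            = (j - (2 * (chaconWord (n+1)).length + 1)) + 3 := by omega
        rw [c1] at e1; rw [c2] at e2; rw [c3] at e3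
        exact ih.2 (j - (2 * (chaconWord (n+1)).length + 1)) (by omega) ⟨e0, e1, e2, e3⟩

theorem chacon_no_11_no_0000 (W : ℕ → Fin 2) (hW : IsChaconInfWord W) (i : ℕ) :
    ¬ (W i = 1 ∧ W (i + 1) = 1) ∧
      ¬ (W i = 0 ∧ W (i + 1) = 0 ∧ W (i + 2) = 0 ∧ W (i + 3) = 0) := by
  obtain ⟨h11, h0000⟩ := chacon_noBad (i + 3)
  have hlen : i + 4 < (chaconWord (i + 3 + 1)).length := chacon_len_lt (i + 3 + 1)
  have hw : ∀ k, k ≤ i + 3 → W k = (chaconWord (i + 3 + 1)).getD k 0 := fun k hk =>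
    hW (i + 3 + 1) k (by omega)
  constructor
  · intro ⟨e0, e1⟩
    exact h11 i (by omega) ⟨(hw i (by omega)) ▸ e0, (hw (i+1) (by omega)) ▸ e1⟩
  · intro ⟨e0, e1, e2, e3⟩
    exact h0000 i (by omega) ⟨(hw i (by omega)) ▸ e0, (hw (i+1) (by omega)) ▸ e1,
      (hw (i+2) (by omega)) ▸ e2, (hw (i+3) (by omega)) ▸ e3⟩
end

section
/- For all natural numbers n and k, the number of positions at which Wₙ occurs in W_{n+k} is exactly 3ᵏ; i.e., the set {j : Wₙ occurs in W_{n+k} at position j} has cardinality 3ᵏ. -/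
open Filter

local notation:max "cl" n:max => List.length (chaconWord n)

lemma chL_succ (n : ℕ) : cl (n+1) = 3 * cl n + 1 := by
  show (chaconWord n ++ chaconWord n ++ [1] ++ chaconWord n).length = _
  simp [List.length_append]; ring

lemma chL_pos (n : ℕ) : 0 < cl n := by
  induction n with
  | zero => decide
  | succ n ih => rw [chL_succ]; omega

lemma chL_mono {n m : ℕ} (h : n ≤ m) : cl n ≤ cl m := by
  induction m with
  | zero =>
    have : n = 0 := by omega
    subst this; exact le_refl _
  | succ m ih =>
    rcases Nat.lt_or_ge n (m+1) with h'|h'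
    · have := ih (by omega); rw [chL_succ]; omega
    · have : n = m + 1 := by omega
      subst this; exact le_refl _

lemma chacon_getD_succ (n i : ℕ) :
    (chaconWord (n+1)).getD i 0 =
      if i < cl n then (chaconWord n).getD i 0
      else if i < 2 * cl n then (chaconWord n).getD (i - cl n) 0
      else if i = 2 * cl n then 1
      else (chaconWord n).getD (i - (2 * cl n + 1)) 0 := by
  have e : chaconWord (n+1) = ((chaconWord n ++ chaconWord n) ++ [1]) ++ chaconWord n := rfl
  rw [e]
  split_ifs with h1 h2 h3
  · rw [List.getD_append _ _ _ i (by simp [List.length_append]; omega),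
      List.getD_append _ _ _ i (by simp [List.length_append]; omega),
      List.getD_append _ _ _ i h1]
  · rw [List.getD_append _ _ _ i (by simp [List.length_append]; omega),
      List.getD_append _ _ _ i (by simp [List.length_append]; omega),
      List.getD_append_right _ _ _ i (by omega)]
  · rw [List.getD_append _ _ _ i (by simp [List.length_append]; omega),
      List.getD_append_right _ _ _ i (by simp [List.length_append]; omega)]
    have : i - (chaconWord n ++ chaconWord n).length = 0 := by
      simp [List.length_append]; omega
    rw [this]; rfl
  · rw [List.getD_append_right _ _ _ i (by simp [List.length_append]; omega)]
    congr 1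
    simp [List.length_append]; omega

lemma g1 {n i : ℕ} (h : i < cl n) :
    (chaconWord (n+1)).getD i 0 = (chaconWord n).getD i 0 := by
  rw [chacon_getD_succ]; simp [h]

lemma g2 {n i : ℕ} (h : i < cl n) :
    (chaconWord (n+1)).getD (cl n + i) 0 = (chaconWord n).getD i 0 := by
  rw [chacon_getD_succ]
  rw [if_neg (by omega), if_pos (by omega)]
  congr 1; omega

lemma g3 (n : ℕ) : (chaconWord (n+1)).getD (2 * cl n) 0 = 1 := by
  rw [chacon_getD_succ]
  rw [if_neg (by have := chL_pos n; omega), if_neg (by omega), if_pos rfl]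

lemma g4 {n i : ℕ} (h : i < cl n) :
    (chaconWord (n+1)).getD (2 * cl n + 1 + i) 0 = (chaconWord n).getD i 0 := by
  rw [chacon_getD_succ]
  rw [if_neg (by omega), if_neg (by omega), if_neg (by omega)]
  congr 1; omega

lemma chacon_head (n : ℕ) : (chaconWord n).getD 0 0 = 0 := by
  induction n with
  | zero => rfl
  | succ n ih => rw [g1 (chL_pos n)]; exact ih
-- occurrence shift lemmas (inject occurrence in W m into W (m+1))
lemma occ_lift1 {α : List (Fin 2)} {m j : ℕ} (h : OccursAt α (chaconWord m) j) :
    OccursAt α (chaconWord (m+1)) j := by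
  obtain ⟨hl, hg⟩ := h
  refine ⟨by rw [chL_succ]; omega, fun k hk => ?_⟩
  rw [g1 (by omega)]; exact hg k hk

lemma occ_lift2 {α : List (Fin 2)} {m j : ℕ} (h : OccursAt α (chaconWord m) j) :
    OccursAt α (chaconWord (m+1)) (cl m + j) := by
  obtain ⟨hl, hg⟩ := h
  refine ⟨by rw [chL_succ]; omega, fun k hk => ?_⟩
  have e : cl m + j + k = cl m + (j + k) := by omega
  rw [e, g2 (by omega)]; exact hg k hk

lemma occ_lift3 {α : List (Fin 2)} {m j : ℕ} (h : OccursAt α (chaconWord m) j) :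
    OccursAt α (chaconWord (m+1)) (2 * cl m + 1 + j) := by
  obtain ⟨hl, hg⟩ := h
  refine ⟨by rw [chL_succ]; omega, fun k hk => ?_⟩
  have e : 2 * cl m + 1 + j + k = 2 * cl m + 1 + (j + k) := by omega
  rw [e, g4 (by omega)]; exact hg k hk

-- restriction lemmas
lemma occ_restrict1 {α : List (Fin 2)} {m j : ℕ} (h : OccursAt α (chaconWord (m+1)) j)
    (hb : j + α.length ≤ cl m) : OccursAt α (chaconWord m) j := by
  obtain ⟨hl, hg⟩ := h
  refine ⟨hb, fun k hk => ?_⟩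
  rw [← g1 (show j + k < cl m by omega)]; exact hg k hk

lemma occ_restrict2 {α : List (Fin 2)} {m j : ℕ} (h : OccursAt α (chaconWord (m+1)) (cl m + j))
    (hb : j + α.length ≤ cl m) : OccursAt α (chaconWord m) j := by
  obtain ⟨hl, hg⟩ := h
  refine ⟨hb, fun k hk => ?_⟩
  rw [← g2 (show j + k < cl m by omega)]
  have e : cl m + (j + k) = cl m + j + k := by omega
  rw [e]; exact hg k hk

lemma occ_restrict3 {α : List (Fin 2)} {m j : ℕ}
    (h : OccursAt α (chaconWord (m+1)) (2 * cl m + 1 + j)) : OccursAt α (chaconWord m) j := by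
  obtain ⟨hl, hg⟩ := h
  rw [chL_succ] at hl
  refine ⟨by omega, fun k hk => ?_⟩
  rw [← g4 (show j + k < cl m by omega)]
  have e : 2 * cl m + 1 + (j + k) = 2 * cl m + 1 + j + k := by omega
  rw [e]; exact hg k hk

-- window equalities around the junctions of W (m+2)
lemma E1 {m i : ℕ} (h : i < 2 * cl m) :
    (chaconWord (m+2)).getD (2 * cl m + 1 + i) 0 = (chaconWord (m+1)).getD i 0 := by
  rcases Nat.lt_or_ge i (cl m) with h'|h'
  · rw [show (m+2) = (m+1)+1 from rfl, g1 (by rw [chL_succ]; omega), g4 h', g1 h']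
  · have e : 2 * cl m + 1 + i = cl (m+1) + (i - cl m) := by rw [chL_succ]; omega
    rw [show (m+2) = (m+1)+1 from rfl, e, g2 (by rw [chL_succ]; omega)]
    have e2 : i = cl m + (i - cl m) := by omega
    rw [g1 (show i - cl m < cl m by omega)]
    conv_rhs => rw [e2, g2 (show i - cl m < cl m by omega)]

lemma E2 {m i : ℕ} (h : i < 2 * cl m + 1) :
    (chaconWord (m+2)).getD (cl (m+1) + (2 * cl m + 1 + i)) 0
      = (chaconWord (m+1)).getD (cl m + i) 0 := by
  rcases Nat.lt_or_ge i (cl m) with h'|h'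
  · rw [show (m+2) = (m+1)+1 from rfl, g2 (by rw [chL_succ]; omega), g4 h', g2 h']
  · rcases Nat.eq_or_lt_of_le h' with h''|h''
    · have e : cl (m+1) + (2 * cl m + 1 + i) = 2 * cl (m+1) := by rw [chL_succ]; omega
      have e2 : cl m + i = 2 * cl m := by omega
      rw [show (m+2) = (m+1)+1 from rfl, e, g3, e2, g3]
    · have e : cl (m+1) + (2 * cl m + 1 + i) = 2 * cl (m+1) + 1 + (i - cl m - 1) := by
        rw [chL_succ]; omega
      have e2 : cl m + i = 2 * cl m + 1 + (i - cl m - 1) := by omega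
      rw [show (m+2) = (m+1)+1 from rfl, e, g4 (by rw [chL_succ]; omega), e2, g4 (by omega)]
      exact g1 (by omega)

lemma occ_self {n j : ℕ} : OccursAt (chaconWord n) (chaconWord n) j ↔ j = 0 := by
  constructor
  · intro h
    have := h.1
    have := chL_pos n
    omega
  · rintro rfl
    exact ⟨by omega, fun k hk => by rw [Nat.zero_add]⟩

-- a W(n+1)-occurrence yields a W n-occurrence at the same spot
lemma occ_of_prefix {n j : ℕ} {β : List (Fin 2)}
    (h : OccursAt (chaconWord (n+1)) β j) : OccursAt (chaconWord n) β j := by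
  obtain ⟨hl, hg⟩ := h
  rw [chL_succ] at hl
  refine ⟨by omega, fun k hk => ?_⟩
  rw [← g1 hk]
  exact hg k (by rw [chL_succ]; omega)
def chaconDecomp (n m : ℕ) : Prop :=
  ∀ j, OccursAt (chaconWord n) (chaconWord (m+1)) j ↔
    (OccursAt (chaconWord n) (chaconWord m) j ∨
     (∃ e, OccursAt (chaconWord n) (chaconWord m) e ∧ j = cl m + e) ∨
     (∃ e, OccursAt (chaconWord n) (chaconWord m) e ∧ j = 2 * cl m + 1 + e))

lemma chaconDecomp_step {n m : ℕ} (hnm : n ≤ m) (hD : chaconDecomp n m) :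
    chaconDecomp n (m+1) := by
  have hln := chL_pos n
  have hlm := chL_mono hnm
  have hsm := chL_succ m
  have hsm2 := chL_succ (m+1)
  intro j
  constructor
  · intro h
    have hb := h.1
    rcases le_or_gt (j + cl n) (cl (m+1)) with hc | hc
    · exact Or.inl (occ_restrict1 h hc)
    rcases Nat.lt_or_ge j (cl (m+1)) with hc2 | hc2
    · -- straddle over the first junction : impossible
      exfalso
      have hocc : OccursAt (chaconWord n) (chaconWord (m+1)) (j - (2 * cl m + 1)) := by
        refine ⟨by omega, fun k hk => ?_⟩
        rw [← E1 (show j - (2 * cl m + 1) + k < 2 * cl m by omega)]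
        have e : 2 * cl m + 1 + (j - (2 * cl m + 1) + k) = j + k := by omega
        rw [e]; exact h.2 k hk
      rcases (hD _).mp hocc with h1 | ⟨e, he, hpe⟩ | ⟨e, he, hpe⟩
      · have := h1.1; omega
      · have := he.1; omega
      · omega
    rcases le_or_gt (j + cl n) (2 * cl (m+1)) with hc3 | hc3
    · -- inside the second copy
      rw [show j = cl (m+1) + (j - cl (m+1)) by omega] at h
      exact Or.inr (Or.inl ⟨j - cl (m+1), occ_restrict2 h (by omega), by omega⟩)
    rcases le_or_gt j (2 * cl (m+1)) with hc4 | hc4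
    · -- straddle over the second junction : impossible
      exfalso
      have hocc : OccursAt (chaconWord n) (chaconWord (m+1)) (j - (4 * cl m + 2)) := by
        refine ⟨by omega, fun k hk => ?_⟩
        have e2 : j - (4 * cl m + 2) + k = cl m + (j - (4 * cl m + 2) - cl m + k) := by omega
        rw [e2, ← E2 (show j - (4 * cl m + 2) - cl m + k < 2 * cl m + 1 by omega)]
        have e3 : cl (m+1) + (2 * cl m + 1 + (j - (4 * cl m + 2) - cl m + k)) = j + k := by
          omega
        rw [e3]; exact h.2 k hk
      rcases (hD _).mp hocc with h1 | ⟨e, he, hpe⟩ | ⟨e, he, hpe⟩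
      · have := h1.1; omega
      · have := he.1; omega
      · omega
    · -- inside the third copy
      rw [show j = 2 * cl (m+1) + 1 + (j - (2 * cl (m+1) + 1)) by omega] at h
      exact Or.inr (Or.inr ⟨j - (2 * cl (m+1) + 1), occ_restrict3 h, by omega⟩)
  · rintro (h1 | ⟨e, he, rfl⟩ | ⟨e, he, rfl⟩)
    · exact occ_lift1 h1
    · exact occ_lift2 he
    · exact occ_lift3 he

lemma chacon_getD_join (n : ℕ) : (chaconWord (n+1)).getD (cl n) 0 = 0 := by
  have h0 := g2 (chL_pos n) (i := 0)
  calc (chaconWord (n+1)).getD (cl n) 0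
      = (chaconWord (n+1)).getD (cl n + 0) 0 := by norm_num
    _ = (chaconWord n).getD 0 0 := h0
    _ = 0 := chacon_head n

lemma chacon_lemma1 (n : ℕ) :
    ∀ j, OccursAt (chaconWord n) (chaconWord (n+1)) j ↔
      (j = 0 ∨ j = cl n ∨ j = 2 * cl n + 1) := by
  induction n with
  | zero =>
    intro j
    constructor
    · intro h
      have e1 : cl 0 = 1 := rfl
      have e2 : cl (0+1) = 4 := rfl
      have hb := h.1
      have hj : j ≤ 3 := by omega
      interval_cases j
      · left; rfl
      · right; left; omega
      · exact absurd (h.2 0 (by omega)) (by decide)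
      · right; right; omega
    · rintro (rfl | rfl | rfl)
      · exact occ_lift1 (occ_self.mpr rfl)
      · have := occ_lift2 (occ_self.mpr (rfl : (0:ℕ) = 0)) (m := 0)
        simpa using this
      · have := occ_lift3 (occ_self.mpr (rfl : (0:ℕ) = 0)) (m := 0)
        simpa using this
  | succ n ih =>
    have hln := chL_pos n
    have hsn := chL_succ n
    have hsn2 := chL_succ (n+1)
    have hD : chaconDecomp n n := by
      intro j
      rw [ih j]
      constructor
      · rintro (rfl | rfl | rfl)
        · exact Or.inl (occ_self.mpr rfl)
        · exact Or.inr (Or.inl ⟨0, occ_self.mpr rfl, by omega⟩)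
        · exact Or.inr (Or.inr ⟨0, occ_self.mpr rfl, by omega⟩)
      · rintro (h | ⟨e, he, rfl⟩ | ⟨e, he, rfl⟩)
        · left; exact occ_self.mp h
        · have := occ_self.mp he; right; left; omega
        · have := occ_self.mp he; right; right; omega
    have hD2 := chaconDecomp_step (le_refl n) hD
    have hr := chacon_getD_join n
    intro j
    constructor
    · intro h
      have hb := h.1
      have h' := occ_of_prefix h
      rcases (hD2 j).mp h' with h1 | ⟨e, he, rfl⟩ | ⟨e, he, rfl⟩
      · rcases (ih j).mp h1 with rfl | rfl | rfl
        · left; rfl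
        · exfalso
          have key := h.2 (cl n) (by omega)
          rw [hr, show cl n + cl n = 2 * cl n by omega,
            g1 (show 2 * cl n < cl (n+1) by omega), g3 n] at key
          exact absurd key (by decide)
        · exfalso
          have key := h.2 (2 * cl n) (by omega)
          rw [g3 n, show 2 * cl n + 1 + 2 * cl n = cl (n+1) + cl n by omega,
            g2 (show cl n < cl (n+1) by omega), hr] at key
          exact absurd key (by decide)
      · rcases (ih e).mp he with rfl | rfl | rfl
        · right; left; omega
        · exfalso
          have key := h.2 (cl n) (by omega)
          rw [hr, show cl (n+1) + cl n + cl n = cl (n+1) + 2 * cl n by omega,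
            g2 (show 2 * cl n < cl (n+1) by omega), g3 n] at key
          exact absurd key (by decide)
        · exfalso
          have key := h.2 (cl n) (by omega)
          rw [hr, show cl (n+1) + (2 * cl n + 1) + cl n = 2 * cl (n+1) by omega,
            g3 (n+1)] at key
          exact absurd key (by decide)
      · have : e = 0 := by omega
        right; right; omega
    · rintro (rfl | rfl | rfl)
      · exact occ_lift1 (occ_self.mpr rfl)
      · have := occ_lift2 (occ_self.mpr (rfl : (0:ℕ) = 0)) (m := n+1)
        simpa using this
      · have := occ_lift3 (occ_self.mpr (rfl : (0:ℕ) = 0)) (m := n+1)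
        simpa using this
lemma chaconDecomp_self (n : ℕ) : chaconDecomp n n := by
  intro j
  rw [chacon_lemma1 n j]
  constructor
  · rintro (rfl | rfl | rfl)
    · exact Or.inl (occ_self.mpr rfl)
    · exact Or.inr (Or.inl ⟨0, occ_self.mpr rfl, by omega⟩)
    · exact Or.inr (Or.inr ⟨0, occ_self.mpr rfl, by omega⟩)
  · rintro (h | ⟨e, he, rfl⟩ | ⟨e, he, rfl⟩)
    · left; exact occ_self.mp h
    · have := occ_self.mp he; right; left; omega
    · have := occ_self.mp he; right; right; omega

lemma chaconDecomp_all (n k : ℕ) : chaconDecomp n (n + k) := by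
  induction k with
  | zero => exact chaconDecomp_self n
  | succ k ih => exact chaconDecomp_step (Nat.le_add_right n k) ih

theorem chacon_occurrence_count' (n k : ℕ) :
    {j : ℕ | OccursAt (chaconWord n) (chaconWord (n + k)) j}.ncard = 3 ^ k := by
  induction k with
  | zero =>
    have : {j : ℕ | OccursAt (chaconWord n) (chaconWord (n + 0)) j} = {0} := by
      ext j
      rw [Nat.add_zero]
      simp only [Set.mem_setOf_eq, Set.mem_singleton_iff]
      exact occ_self
    rw [this]
    simp
  | succ k ih =>
    have hd := chaconDecomp_all n k
    set S := {j : ℕ | OccursAt (chaconWord n) (chaconWord (n + k)) j} with hS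
    have hln := chL_pos n
    have hbound : ∀ j ∈ S, j + cl n ≤ cl (n + k) := fun j hj => hj.1
    have hset : {j : ℕ | OccursAt (chaconWord n) (chaconWord (n + (k+1))) j}
        = S ∪ (fun e => cl (n + k) + e) '' S ∪ (fun e => 2 * cl (n + k) + 1 + e) '' S := by
      ext j
      simp only [Set.mem_setOf_eq, Set.mem_union, Set.mem_image]
      constructor
      · intro hj
        rcases (hd j).mp hj with h1 | ⟨e, he, rfl⟩ | ⟨e, he, rfl⟩
        · exact Or.inl (Or.inl h1)
        · exact Or.inl (Or.inr ⟨e, he, rfl⟩)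
        · exact Or.inr ⟨e, he, rfl⟩
      · rintro ((h1 | ⟨e, he, rfl⟩) | ⟨e, he, rfl⟩)
        · exact (hd j).mpr (Or.inl h1)
        · exact (hd _).mpr (Or.inr (Or.inl ⟨e, he, rfl⟩))
        · exact (hd _).mpr (Or.inr (Or.inr ⟨e, he, rfl⟩))
    have hSfin : S.Finite := by
      refine Set.Finite.subset (Set.finite_Iic (cl (n + k))) (fun j hj => ?_)
      have := hbound j hj
      simp only [Set.mem_Iic]
      omega
    have hinj1 : Function.Injective (fun e : ℕ => cl (n + k) + e) := fun a b hab => by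
      simpa using hab
    have hinj2 : Function.Injective (fun e : ℕ => 2 * cl (n + k) + 1 + e) := fun a b hab => by
      simpa using hab
    have hd12 : Disjoint S ((fun e => cl (n + k) + e) '' S) := by
      rw [Set.disjoint_left]
      rintro j hj ⟨e, he, hfe⟩
      have hfe' : cl (n + k) + e = j := hfe
      have := hbound _ hj
      have := hbound _ he
      omega
    have hd3 : Disjoint (S ∪ (fun e => cl (n + k) + e) '' S)
        ((fun e => 2 * cl (n + k) + 1 + e) '' S) := by
      rw [Set.disjoint_left]
      rintro j hj ⟨e, he, hfe⟩
      have hfe' : 2 * cl (n + k) + 1 + e = j := hfe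
      rcases hj with hj | ⟨f, hf, hgf⟩
      · have := hbound _ hj; omega
      · have hgf' : cl (n + k) + f = j := hgf
        have := hbound _ hf; omega
    rw [hset, Set.ncard_union_eq hd3 (Set.Finite.union hSfin (hSfin.image _)) (hSfin.image _),
      Set.ncard_union_eq hd12 hSfin (hSfin.image _),
      Set.ncard_image_of_injective S hinj1, Set.ncard_image_of_injective S hinj2, ih]
    ring


theorem chacon_occurrence_count (n k : ℕ) :
    {j : ℕ | OccursAt (chaconWord n) (chaconWord (n + k)) j}.ncard = 3 ^ k :=
  chacon_occurrence_count' n k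
end

section
/- For every n, every occurrence of Wₙ in the infinite word W at a position j > 0 is immediately preceded by either Wₙ or Wₙ1: either j ≥ |Wₙ| and Wₙ occurs in W at position j − |Wₙ|, or j ≥ |Wₙ| + 1, W(j−1) = 1, and Wₙ occurs in W at position j − |Wₙ| − 1. -/
open Filter

namespace ChaconAux

lemma fin2 (c : Fin 2) : c = 0 ∨ c = 1 := by fin_cases c <;> simp

lemma cw_succ (n : ℕ) : chaconWord (n+1) = chaconWord n ++ chaconWord n ++ [1] ++ chaconWord n := rfl

lemma len_pos (n : ℕ) : 0 < (chaconWord n).length := by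
  induction n with
  | zero => simp [chaconWord]
  | succ n ih => rw [cw_succ]; simp only [List.length_append, List.length_singleton]; omega

lemma len_succ (n : ℕ) : (chaconWord (n+1)).length = 3 * (chaconWord n).length + 1 := by
  rw [cw_succ]; simp only [List.length_append, List.length_singleton]; omega

lemma len_ge (n : ℕ) : n + 1 ≤ (chaconWord n).length := by
  induction n with
  | zero => simp [chaconWord]
  | succ n ih => rw [len_succ]; omega

lemma cw1 : chaconWord 1 = [0, 0, 1, 0] := rfl

lemma cw_head (n : ℕ) : (chaconWord n).getD 0 0 = 0 := by
  induction n with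
  | zero => rfl
  | succ n ih =>
    rw [cw_succ, List.getD_append _ _ _ _ (by simp only [List.length_append, List.length_singleton]; have := len_pos n; omega),
      List.getD_append _ _ _ _ (by simp only [List.length_append, List.length_singleton]; have := len_pos n; omega),
      List.getD_append _ _ _ _ (len_pos n)]
    exact ih

lemma getD_blk1 (n k : ℕ) (hk : k < (chaconWord n).length) :
    (chaconWord (n+1)).getD k 0 = (chaconWord n).getD k 0 := by
  rw [cw_succ, List.getD_append _ _ _ _ (by simp only [List.length_append, List.length_singleton]; omega),
    List.getD_append _ _ _ _ (by simp only [List.length_append, List.length_singleton]; omega),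
    List.getD_append _ _ _ _ hk]

lemma getD_blk2 (n k : ℕ) (hk : k < (chaconWord n).length) :
    (chaconWord (n+1)).getD ((chaconWord n).length + k) 0 = (chaconWord n).getD k 0 := by
  rw [cw_succ, List.getD_append _ _ _ _ (by simp only [List.length_append, List.length_singleton]; omega),
    List.getD_append _ _ _ _ (by simp only [List.length_append, List.length_singleton]; omega),
    List.getD_append_right _ _ _ _ (by omega)]
  congr 1; omega

lemma getD_mid (n : ℕ) :
    (chaconWord (n+1)).getD (2 * (chaconWord n).length) 0 = 1 := by
  rw [cw_succ, List.getD_append _ _ _ _ (by simp only [List.length_append, List.length_singleton]; have := len_pos n; omega),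
    List.getD_append_right _ _ _ _ (by simp only [List.length_append, List.length_singleton]; omega)]
  simp only [List.length_append, List.length_singleton]
  rw [show 2 * (chaconWord n).length - ((chaconWord n).length + (chaconWord n).length) = 0 by omega]
  rfl

lemma getD_blk3 (n k : ℕ) :
    (chaconWord (n+1)).getD (2 * (chaconWord n).length + 1 + k) 0 = (chaconWord n).getD k 0 := by
  rw [cw_succ, List.getD_append_right _ _ _ _ (by simp only [List.length_append, List.length_singleton]; omega)]
  congr 1; simp only [List.length_append, List.length_singleton]; omega

/-- block size at level `n` -/
def sz (n : ℕ) (c : Fin 2) : ℕ := if c = 0 then (chaconWord n).length else 1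

lemma sz_pos (n : ℕ) (c : Fin 2) : 0 < sz n c := by
  unfold sz; split
  · exact len_pos n
  · exact one_pos

/-- starting position of the `i`-th level-`n` block -/
def psum (W : ℕ → Fin 2) (n : ℕ) : ℕ → ℕ
  | 0 => 0
  | i + 1 => psum W n i + sz n (W i)

lemma psum_succ (W : ℕ → Fin 2) (n i : ℕ) :
    psum W n (i+1) = psum W n i + sz n (W i) := rfl

lemma psum_strictMono (W : ℕ → Fin 2) (n : ℕ) : StrictMono (psum W n) :=
  strictMono_nat_of_lt_succ fun i => by
    have := sz_pos n (W i); rw [psum_succ]; omega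

lemma self_le_psum (W : ℕ → Fin 2) (n : ℕ) : ∀ i, i ≤ psum W n i := by
  intro i; induction i with
  | zero => simp [psum]
  | succ i ih => have := sz_pos n (W i); rw [psum_succ]; omega

lemma locate (W : ℕ → Fin 2) (n j : ℕ) :
    ∃ p, psum W n p ≤ j ∧ j < psum W n (p+1) := by
  classical
  set P := fun p => psum W n p ≤ j with hP
  have h0 : P 0 := by simp [hP, psum]
  have hp : P (Nat.findGreatest P j) := Nat.findGreatest_spec (Nat.zero_le j) h0
  refine ⟨Nat.findGreatest P j, hp, ?_⟩
  by_contra hcon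
  push_neg at hcon
  have hle : Nat.findGreatest P j + 1 ≤ j :=
    le_trans (self_le_psum W n _) hcon
  exact Nat.findGreatest_is_greatest (Nat.lt_succ_self _) hle hcon

/-- one step of the Chacón substitution applied to a finite word -/
def expand (n : ℕ) : List (Fin 2) → List (Fin 2)
  | [] => []
  | c :: u => (if c = 0 then chaconWord n else [1]) ++ expand n u

lemma expand_nil (n : ℕ) : expand n [] = [] := rfl

lemma expand_cons (n : ℕ) (c : Fin 2) (u : List (Fin 2)) :
    expand n (c :: u) = (if c = 0 then chaconWord n else [1]) ++ expand n u := rfl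

lemma expand_append (n : ℕ) (u v : List (Fin 2)) :
    expand n (u ++ v) = expand n u ++ expand n v := by
  induction u with
  | nil => rfl
  | cons c u ih => simp [expand, ih, List.append_assoc]

lemma expand_cw (n m : ℕ) : expand n (chaconWord m) = chaconWord (n + m) := by
  induction m with
  | zero => simp [chaconWord, expand]
  | succ m ih =>
    rw [cw_succ, expand_append, expand_append, expand_append, ih]
    rw [show n + (m+1) = (n+m)+1 from rfl, cw_succ]
    simp [expand]

lemma expand_single_len (n : ℕ) (c : Fin 2) :
    (expand n [c]).length = sz n c := by
  unfold sz; rw [expand_cons]; split <;> simp [expand_nil]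

lemma take_len (W : ℕ → Fin 2) (n : ℕ) (u : List (Fin 2))
    (hk : ∀ k < u.length, W k = u.getD k 0) :
    ∀ i, i ≤ u.length → (expand n (u.take i)).length = psum W n i := by
  intro i
  induction i with
  | zero => intro _; simp [psum, expand_nil]
  | succ i ih =>
    intro h
    have hi : i < u.length := by omega
    rw [List.take_succ, List.getElem?_eq_getElem hi]
    simp only [Option.toList_some]
    rw [expand_append, List.length_append, ih (by omega), expand_single_len]
    rw [psum_succ]
    congr 1
    rw [hk i hi, List.getD_eq_getElem _ _ hi]

lemma struct (W : ℕ → Fin 2) (hW : IsChaconInfWord W) (n i r : ℕ) (hr : r < sz n (W i)) :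
    W (psum W n i + r) = (if W i = 0 then chaconWord n else [1]).getD r 0 := by
  set u := chaconWord (i+1) with hu
  have hiu : i < u.length := by rw [hu]; have := len_ge (i+1); omega
  have hk : ∀ k < u.length, W k = u.getD k 0 := fun k hk => hW (i+1) k hk
  have hWi : W i = u.getD i 0 := hk i hiu
  have hdec : expand n u = expand n (u.take i) ++
      ((if W i = 0 then chaconWord n else [1]) ++ expand n (u.drop (i+1))) := by
    conv_lhs => rw [← List.take_append_drop i u]
    rw [expand_append, List.drop_eq_getElem_cons hiu]
    congr 1
    show expand n (u[i] :: u.drop (i+1)) = _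
    rw [show u[i] = W i by rw [hWi, List.getD_eq_getElem _ _ hiu]]
    rfl
  have hlen1 : (expand n (u.take i)).length = psum W n i :=
    take_len W n u hk i (le_of_lt hiu)
  have hblen : r < (if W i = 0 then chaconWord n else [1]).length := by
    unfold sz at hr; split at hr <;> split <;> simp_all
  have hexp : expand n u = chaconWord (n + (i+1)) := expand_cw n (i+1)
  have hpos : psum W n i + r < (chaconWord (n + (i+1))).length := by
    rw [← hexp, hdec]
    simp only [List.length_append, List.length_singleton]
    omega
  have hval := hW (n + (i+1)) (psum W n i + r) hpos
  rw [← hexp, hdec] at hval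
  rw [List.getD_append_right _ _ _ _ (by omega)] at hval
  rw [hlen1, Nat.add_sub_cancel_left] at hval
  rw [List.getD_append _ _ _ _ hblen] at hval
  exact hval

lemma struct0 (W : ℕ → Fin 2) (hW : IsChaconInfWord W) (n i : ℕ) (h : W i = 0) :
    OccursAtInf W (chaconWord n) (psum W n i) := by
  intro r hr
  have := struct W hW n i r (by unfold sz; rw [h]; simpa using hr)
  rwa [h, if_pos rfl] at this

lemma struct1 (W : ℕ → Fin 2) (hW : IsChaconInfWord W) (n i : ℕ) (h : W i = 1) :
    W (psum W n i) = 1 := by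
  have := struct W hW n i 0 (sz_pos n (W i))
  rw [h] at this
  simpa using this

lemma W0 (W : ℕ → Fin 2) (hW : IsChaconInfWord W) : W 0 = 0 := by
  have := hW 0 0 (by simp [chaconWord])
  simpa [chaconWord] using this

lemma cw1_len : (chaconWord 1).length = 4 := rfl

lemma sz_zero (n : ℕ) : sz n 0 = (chaconWord n).length := if_pos rfl

lemma sz_one (n : ℕ) : sz n 1 = 1 := if_neg (by decide)

lemma psum1_lb (W : ℕ → Fin 2) (hW : IsChaconInfWord W) :
    ∀ p, 1 ≤ p → p + 3 ≤ psum W 1 p := by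
  intro p hp
  induction p with
  | zero => omega
  | succ p ih =>
    rcases Nat.eq_zero_or_pos p with h0 | h1
    · subst h0
      have h4 : psum W 1 (0+1) = 4 := by
        rw [psum_succ, W0 W hW, sz_zero, cw1_len]
        simp [psum]
      omega
    · have := ih h1
      have := sz_pos 1 (W p)
      rw [psum_succ]; omega

lemma blockchar (W : ℕ → Fin 2) (hW : IsChaconInfWord W) (p : ℕ) (h : W p = 0) :
    ∀ s, s < 4 → W (psum W 1 p + s) = [0, 0, 1, 0].getD s 0 := by
  intro s hs
  have := struct0 W hW 1 p h s (by rw [cw1_len]; exact hs)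
  rwa [cw1] at this

lemma no11 (W : ℕ → Fin 2) (hW : IsChaconInfWord W) :
    ∀ j, W j = 1 → W (j+1) = 1 → False := by
  intro j
  induction j using Nat.strong_induction_on with
  | _ j IH =>
    intro h1 h2
    obtain ⟨p, hp1, hp2⟩ := locate W 1 j
    rcases fin2 (W p) with h | h
    · have hb : psum W 1 (p+1) = psum W 1 p + 4 := by
        rw [psum_succ, h, sz_zero, cw1_len]
      have hchar := blockchar W hW p h
      have hr : j - psum W 1 p < 4 := by omega
      have hj : j = psum W 1 p + (j - psum W 1 p) := by omega
      set r := j - psum W 1 p with hrdef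
      interval_cases r
      · rw [hj, hchar 0 (by norm_num)] at h1; exact absurd h1 (by decide)
      · rw [hj, hchar 1 (by norm_num)] at h1; exact absurd h1 (by decide)
      · have e : j + 1 = psum W 1 p + 3 := by omega
        rw [e, hchar 3 (by norm_num)] at h2; exact absurd h2 (by decide)
      · rw [hj, hchar 3 (by norm_num)] at h1; exact absurd h1 (by decide)
    · have hb : psum W 1 (p+1) = psum W 1 p + 1 := by
        rw [psum_succ, h, sz_one]
      have hj1 : j + 1 = psum W 1 (p+1) := by omega
      rcases fin2 (W (p+1)) with h' | h'
      · have := struct0 W hW 1 (p+1) h' 0 (by rw [cw1_len]; norm_num)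
        rw [Nat.add_zero, ← hj1, h2, cw_head 1] at this
        exact absurd this (by decide)
      · have hppos : p ≠ 0 := by
          intro h0; rw [h0, W0 W hW] at h; exact absurd h (by decide)
        have hplt : p < j := by
          have := psum1_lb W hW p (by omega)
          omega
        exact IH p hplt h h'

lemma recog1 (W : ℕ → Fin 2) (hW : IsChaconInfWord W) (i : ℕ)
    (hocc : OccursAtInf W (chaconWord 1) i) :
    ∃ p, W p = 0 ∧ i = psum W 1 p := by
  have hc : ∀ s, s < 4 → W (i + s) = [0, 0, 1, 0].getD s 0 := fun s hs => by
    have := hocc s (by rw [cw1_len]; exact hs)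
    rwa [cw1] at this
  have h0 : W i = 0 := by simpa using hc 0 (by norm_num)
  have h1 : W (i+1) = 0 := by simpa using hc 1 (by norm_num)
  have h2 : W (i+2) = 1 := by simpa using hc 2 (by norm_num)
  obtain ⟨p, hp1, hp2⟩ := locate W 1 i
  rcases fin2 (W p) with h | h
  · have hb : psum W 1 (p+1) = psum W 1 p + 4 := by
      rw [psum_succ, h, sz_zero, cw1_len]
    have hchar := blockchar W hW p h
    have hr : i - psum W 1 p < 4 := by omega
    have hj : i = psum W 1 p + (i - psum W 1 p) := by omega
    set r := i - psum W 1 p with hrdef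
    interval_cases r
    · exact ⟨p, h, by omega⟩
    · have e : i + 1 = psum W 1 p + 2 := by omega
      rw [e, hchar 2 (by norm_num)] at h1; exact absurd h1 (by decide)
    · rw [hj, hchar 2 (by norm_num)] at h0; exact absurd h0 (by decide)
    · have hi1 : i + 1 = psum W 1 (p+1) := by omega
      rcases fin2 (W (p+1)) with h' | h'
      · exfalso
        have := blockchar W hW (p+1) h' 1 (by norm_num)
        have e : psum W 1 (p+1) + 1 = i + 2 := by omega
        rw [e, h2] at this
        exact absurd this (by decide)
      · exfalso
        have := struct1 W hW 1 (p+1) h'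
        rw [← hi1, h1] at this
        exact absurd this (by decide)
  · exfalso
    have hb : psum W 1 (p+1) = psum W 1 p + 1 := by
      rw [psum_succ, h, sz_one]
    have hi : i = psum W 1 p := by omega
    have := struct1 W hW 1 p h
    rw [← hi, h0] at this
    exact absurd this (by decide)

lemma comp (W : ℕ → Fin 2) (hW : IsChaconInfWord W) (n : ℕ) :
    ∀ p, psum W (n+1) p = psum W n (psum W 1 p) := by
  intro p
  induction p with
  | zero => simp [psum]
  | succ p ih =>
    rw [psum_succ, psum_succ, ih]
    set x := psum W 1 p with hx
    rcases fin2 (W p) with h | h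
    · rw [h, sz_zero, sz_zero, cw1_len]
      have hchar := blockchar W hW p h
      have c0 : W x = 0 := by simpa using hchar 0 (by norm_num)
      have c1 : W (x+1) = 0 := by simpa using hchar 1 (by norm_num)
      have c2 : W (x+2) = 1 := by simpa using hchar 2 (by norm_num)
      have c3 : W (x+3) = 0 := by simpa using hchar 3 (by norm_num)
      have e1 : psum W n (x+1) = psum W n x + (chaconWord n).length := by
        rw [psum_succ, c0, sz_zero]
      have e2 : psum W n (x+2) = psum W n (x+1) + (chaconWord n).length := by
        rw [show x+2 = (x+1)+1 from rfl, psum_succ, c1, sz_zero]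
      have e3 : psum W n (x+3) = psum W n (x+2) + 1 := by
        rw [show x+3 = (x+2)+1 from rfl, psum_succ, c2, sz_one]
      have e4 : psum W n (x+4) = psum W n (x+3) + (chaconWord n).length := by
        rw [show x+4 = (x+3)+1 from rfl, psum_succ, c3, sz_zero]
      rw [e4, e3, e2, e1, len_succ]
      omega
    · rw [h, sz_one, sz_one]
      have c := struct1 W hW 1 p h
      rw [← hx] at c
      rw [psum_succ, c, sz_one]

lemma recog (W : ℕ → Fin 2) (hW : IsChaconInfWord W) :
    ∀ n j, OccursAtInf W (chaconWord n) j → ∃ i, W i = 0 ∧ j = psum W n i := by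
  intro n
  induction n with
  | zero =>
    intro j h
    have psum0 : ∀ i, psum W 0 i = i := by
      intro i
      induction i with
      | zero => rfl
      | succ i ih =>
        have hsz : sz 0 (W i) = 1 := by unfold sz; split <;> rfl
        rw [psum_succ, ih, hsz]
    refine ⟨j, ?_, (psum0 j).symm⟩
    have := h 0 (by simp [chaconWord])
    simpa [chaconWord] using this
  | succ n IH =>
    intro j hocc
    have hL := len_pos n
    have hlen : (chaconWord (n+1)).length = 3 * (chaconWord n).length + 1 := len_succ n
    set L := (chaconWord n).length with hLdef
    have occ0 : OccursAtInf W (chaconWord n) j := by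
      intro k hk
      have := hocc k (by omega)
      rwa [getD_blk1 n k hk] at this
    have occ1 : OccursAtInf W (chaconWord n) (j + L) := by
      intro k hk
      have := hocc (L + k) (by omega)
      rw [getD_blk2 n k hk, show j + (L + k) = j + L + k by omega] at this
      exact this
    have h1 : W (j + 2*L) = 1 := by
      have := hocc (2*L) (by omega)
      rwa [getD_mid n] at this
    have occ2 : OccursAtInf W (chaconWord n) (j + 2*L + 1) := by
      intro k hk
      have := hocc (2*L + 1 + k) (by omega)
      rw [getD_blk3 n k, show j + (2*L + 1 + k) = j + 2*L + 1 + k by omega] at this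
      exact this
    obtain ⟨i, hi0, hji⟩ := IH j occ0
    obtain ⟨i', hi'0, hji'⟩ := IH (j + L) occ1
    have hpsi1 : psum W n (i+1) = j + L := by
      rw [psum_succ, hi0, sz_zero, ← hLdef]; omega
    have hii' : i' = i + 1 := by
      refine (psum_strictMono W n).injective ?_
      rw [← hji', hpsi1]
    have hWi1 : W (i+1) = 0 := by rw [← hii']; exact hi'0
    have hpsi2 : psum W n (i+2) = j + 2*L := by
      rw [show i+2 = (i+1)+1 from rfl, psum_succ, hWi1, sz_zero, ← hLdef, hpsi1]; omega
    have hWi2 : W (i+2) = 1 := by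
      rcases fin2 (W (i+2)) with h | h
      · exfalso
        have := struct0 W hW n (i+2) h 0 hL
        rw [hpsi2, Nat.add_zero, h1, cw_head n] at this
        exact absurd this (by decide)
      · exact h
    have hpsi3 : psum W n (i+3) = j + 2*L + 1 := by
      rw [show i+3 = (i+2)+1 from rfl, psum_succ, hWi2, sz_one, hpsi2]
    obtain ⟨i'', hi''0, hji''⟩ := IH (j + 2*L + 1) occ2
    have hii'' : i'' = i + 3 := by
      refine (psum_strictMono W n).injective ?_
      rw [← hji'', hpsi3]
    have hWi3 : W (i+3) = 0 := by rw [← hii'']; exact hi''0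
    have hocc1 : OccursAtInf W (chaconWord 1) i := by
      intro k hk
      rw [cw1_len] at hk
      interval_cases k
      · simpa [cw1] using hi0
      · simpa [cw1] using hWi1
      · simpa [cw1] using hWi2
      · simpa [cw1] using hWi3
    obtain ⟨p, hp0, hip⟩ := recog1 W hW i hocc1
    refine ⟨p, hp0, ?_⟩
    rw [comp W hW n p, ← hip]
    exact hji

end ChaconAux

open ChaconAux in
theorem chacon_preceded (W : ℕ → Fin 2) (hW : IsChaconInfWord W) (n j : ℕ) (hj : 0 < j)
    (hocc : OccursAtInf W (chaconWord n) j) :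
    ((chaconWord n).length ≤ j ∧ OccursAtInf W (chaconWord n) (j - (chaconWord n).length)) ∨
      ((chaconWord n).length + 1 ≤ j ∧ W (j - 1) = 1 ∧
        OccursAtInf W (chaconWord n) (j - (chaconWord n).length - 1)) := by
  have hL := len_pos n
  obtain ⟨i, hi0, hji⟩ := recog W hW n j hocc
  have hipos : 0 < i := by
    rcases Nat.eq_zero_or_pos i with h0 | h; swap
    · exact h
    · exfalso; rw [h0] at hji; simp [psum] at hji; omega
  obtain ⟨i₀, rfl⟩ : ∃ i₀, i = i₀ + 1 := ⟨i - 1, by omega⟩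
  rcases fin2 (W i₀) with h | h
  · left
    have hj' : j = psum W n i₀ + (chaconWord n).length := by
      rw [hji, psum_succ, h, sz_zero]
    constructor
    · omega
    · rw [show j - (chaconWord n).length = psum W n i₀ by omega]
      exact struct0 W hW n i₀ h
  · right
    have hj' : j = psum W n i₀ + 1 := by
      rw [hji, psum_succ, h, sz_one]
    have hW1 : W (j - 1) = 1 := by
      rw [show j - 1 = psum W n i₀ by omega]
      exact struct1 W hW n i₀ h
    have hi₀pos : 0 < i₀ := by
      rcases Nat.eq_zero_or_pos i₀ with h0 | hp
      · exfalso; rw [h0, W0 W hW] at h; exact absurd h (by decide)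
      · exact hp
    obtain ⟨i₁, rfl⟩ : ∃ i₁, i₀ = i₁ + 1 := ⟨i₀ - 1, by omega⟩
    have h2 : W i₁ = 0 := by
      rcases fin2 (W i₁) with h' | h'
      · exact h'
      · exact absurd (no11 W hW i₁ h' h) (by simp)
    have hps : psum W n (i₁ + 1) = psum W n i₁ + (chaconWord n).length := by
      rw [psum_succ, h2, sz_zero]
    refine ⟨by omega, hW1, ?_⟩
    rw [show j - (chaconWord n).length - 1 = psum W n i₁ by omega]
    exact struct0 W hW n i₁ h2
end

section
/- For every n, the word Wₙ Wₙ Wₙ Wₙ (the fourfold concatenation of Wₙ) does not occur in the infinite word W at any position. -/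
open Filter

def cf (b : List (Fin 2)) (x : Fin 2) : List (Fin 2) := if x = 0 then b else [1]

lemma cf_zero (b : List (Fin 2)) : cf b 0 = b := rfl

lemma cf_one (b : List (Fin 2)) : cf b 1 = [1] := rfl

def csub (b u : List (Fin 2)) : List (Fin 2) := u.flatMap (cf b)

def cpos (b u : List (Fin 2)) (i : ℕ) : ℕ := (csub b (u.take i)).length

lemma csub_nil (b : List (Fin 2)) : csub b [] = [] := rfl

lemma csub_cons (b : List (Fin 2)) (x : Fin 2) (u : List (Fin 2)) :
    csub b (x :: u) = cf b x ++ csub b u := rfl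

lemma csub_append (b u v : List (Fin 2)) : csub b (u ++ v) = csub b u ++ csub b v :=
  List.flatMap_append ..

lemma cpos_zero (b u : List (Fin 2)) : cpos b u 0 = 0 := rfl

lemma cpos_succ (b u : List (Fin 2)) (i : ℕ) (hi : i < u.length) :
    cpos b u (i + 1) = cpos b u i + (cf b (u.getD i 0)).length := by
  unfold cpos
  rw [List.take_succ, List.getElem?_eq_getElem hi]
  simp only [Option.toList_some, csub_append, List.length_append]
  rw [List.getD_eq_getElem u 0 hi]
  simp [csub, cf]

lemma cpos_le_succ (b u : List (Fin 2)) (i : ℕ) : cpos b u i ≤ cpos b u (i + 1) := by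
  rcases lt_or_ge i u.length with h | h
  · rw [cpos_succ b u i h]; omega
  · unfold cpos
    rw [List.take_of_length_le h, List.take_of_length_le (by omega)]

lemma cpos_mono (b u : List (Fin 2)) : Monotone (cpos b u) :=
  monotone_nat_of_le_succ (cpos_le_succ b u)

lemma cpos_length (b u : List (Fin 2)) : cpos b u u.length = (csub b u).length := by
  unfold cpos; rw [List.take_length]

lemma item_getD (b u : List (Fin 2)) (i r : ℕ) (hi : i < u.length)
    (hr : r < (cf b (u.getD i 0)).length) :
    (csub b u).getD (cpos b u i + r) 0 = (cf b (u.getD i 0)).getD r 0 := by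
  have hsplit : csub b u = csub b (u.take i) ++ csub b (u.drop i) := by
    rw [← csub_append, List.take_append_drop]
  have hcp : cpos b u i = (csub b (u.take i)).length := rfl
  rw [hsplit, List.getD_append_right _ _ _ _ (by rw [← hcp]; omega)]
  rw [← hcp, Nat.add_sub_cancel_left]
  rw [List.drop_eq_getElem_cons hi, csub_cons]
  rw [List.getD_eq_getElem u 0 hi] at hr ⊢
  exact List.getD_append _ _ _ _ hr

lemma cpos_cons_succ (b : List (Fin 2)) (x : Fin 2) (u : List (Fin 2)) (i : ℕ) :
    cpos b (x :: u) (i + 1) = (cf b x).length + cpos b u i := by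
  unfold cpos
  rw [List.take_succ_cons, csub_cons, List.length_append]

lemma exists_item (b u : List (Fin 2)) (p : ℕ) (hp : p < (csub b u).length) :
    ∃ i < u.length, cpos b u i ≤ p ∧ p < cpos b u (i + 1) := by
  induction u generalizing p with
  | nil => simp [csub_nil] at hp
  | cons x u ih =>
    rw [csub_cons, List.length_append] at hp
    rcases lt_or_ge p (cf b x).length with h | h
    · exact ⟨0, by simp, by rw [cpos_zero]; omega,
        by rw [cpos_cons_succ, cpos_zero]; omega⟩
    · obtain ⟨i, hi, h1, h2⟩ := ih (p - (cf b x).length) (by omega)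
      exact ⟨i + 1, by simp; omega,
        by rw [cpos_cons_succ]; omega,
        by rw [cpos_cons_succ]; omega⟩


namespace Chacon

lemma succ_eq (n : ℕ) :
    chaconWord (n+1) = chaconWord n ++ chaconWord n ++ [1] ++ chaconWord n := rfl

lemma len_succ (n : ℕ) :
    (chaconWord (n+1)).length = 3 * (chaconWord n).length + 1 := by
  simp [succ_eq]; ring

lemma len_zero : (chaconWord 0).length = 1 := rfl

lemma len_pos (n : ℕ) : 0 < (chaconWord n).length := by
  induction n with
  | zero => simp [len_zero]
  | succ n ih => rw [len_succ]; omega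

lemma len_ge (n : ℕ) : n + 1 ≤ (chaconWord n).length := by
  induction n with
  | zero => simp [len_zero]
  | succ n ih => rw [len_succ]; omega

lemma len_mod3 (n : ℕ) : (chaconWord n).length % 3 = 1 := by
  induction n with
  | zero => simp [len_zero]
  | succ n ih => rw [len_succ]; omega

/-- getD in first copy -/
lemma g1 (n p : ℕ) (hp : p < (chaconWord n).length) :
    (chaconWord (n+1)).getD p 0 = (chaconWord n).getD p 0 := by
  rw [succ_eq, List.getD_append _ _ _ _ (by simp; omega), List.getD_append _ _ _ _ (by simp; omega),
    List.getD_append _ _ _ _ hp]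

/-- getD in second copy -/
lemma g2 (n p : ℕ) (hp : p < (chaconWord n).length) :
    (chaconWord (n+1)).getD ((chaconWord n).length + p) 0 = (chaconWord n).getD p 0 := by
  rw [succ_eq, List.getD_append, List.getD_append, List.getD_append_right] <;> simp <;> omega

/-- the separator -/
lemma g3 (n : ℕ) :
    (chaconWord (n+1)).getD (2 * (chaconWord n).length) 0 = 1 := by
  rw [succ_eq, List.getD_append _ _ _ _ (by simp; omega),
    List.getD_append_right _ _ _ _ (by simp; omega)]
  have : 2 * (chaconWord n).length - ((chaconWord n).length + (chaconWord n).length) = 0 := by omega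
  simp [this]

/-- getD in third copy -/
lemma g4 (n p : ℕ) (hp : p < (chaconWord n).length) :
    (chaconWord (n+1)).getD (2 * (chaconWord n).length + 1 + p) 0 = (chaconWord n).getD p 0 := by
  rw [succ_eq, List.getD_append_right]
  · congr 1; simp; omega
  · simp; omega

end Chacon

namespace Chacon

lemma first_zero (n : ℕ) : (chaconWord n).getD 0 0 = 0 := by
  induction n with
  | zero => rfl
  | succ n ih => rw [g1 n 0 (len_pos n)]; exact ih

lemma last_zero (n : ℕ) : (chaconWord n).getD ((chaconWord n).length - 1) 0 = 0 := by
  induction n with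
  | zero => rfl
  | succ n ih =>
    have h := g4 n ((chaconWord n).length - 1) (by have := len_pos n; omega)
    rw [len_succ]
    have e : 3 * (chaconWord n).length + 1 - 1
        = 2 * (chaconWord n).length + 1 + ((chaconWord n).length - 1) := by
      have := len_pos n; omega
    rw [e, h]; exact ih

lemma one_ge (n : ℕ) (hn : 1 ≤ n) : 4 ≤ (chaconWord n).length := by
  have := len_ge n
  rcases Nat.exists_eq_add_of_le hn with ⟨m, rfl⟩
  rw [add_comm, len_succ]
  have := len_pos m; omega

lemma getD2_one (n : ℕ) (hn : 1 ≤ n) : (chaconWord n).getD 2 0 = 1 := by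
  induction n with
  | zero => omega
  | succ n ih =>
    rcases Nat.eq_zero_or_pos n with h0 | h1
    · subst h0; decide
    · rw [g1 n 2 (by have := one_ge n h1; omega)]; exact ih h1

lemma sublast_one (n : ℕ) (hn : 1 ≤ n) :
    (chaconWord n).getD ((chaconWord n).length - 2) 0 = 1 := by
  induction n with
  | zero => omega
  | succ n ih =>
    rcases Nat.eq_zero_or_pos n with h0 | h1
    · subst h0; decide
    · have h4 := one_ge n h1
      have h := g4 n ((chaconWord n).length - 2) (by omega)
      rw [len_succ]
      have e : 3 * (chaconWord n).length + 1 - 2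
          = 2 * (chaconWord n).length + 1 + ((chaconWord n).length - 2) := by omega
      rw [e, h]; exact ih h1

/-- no factor `11` -/
lemma no11 (n : ℕ) : ∀ i, i + 1 < (chaconWord n).length →
    ¬ ((chaconWord n).getD i 0 = 1 ∧ (chaconWord n).getD (i+1) 0 = 1) := by
  induction n with
  | zero => intro i hi; simp [len_zero] at hi
  | succ n ih =>
    intro i hi
    set L := (chaconWord n).length with hL
    have hLpos := len_pos n
    rw [len_succ] at hi
    rcases lt_trichotomy (i+1) L with h | h | h
    · rw [g1 n i (by omega), g1 n (i+1) h]; exact ih i h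
    · -- i = L - 1 : first letter is last of copy 1, which is 0
      rintro ⟨c1, -⟩
      rw [g1 n i (by omega)] at c1
      have := last_zero n
      rw [← hL, show L - 1 = i by omega] at this
      rw [this] at c1; exact absurd c1 (by decide)
    · -- i ≥ L
      rcases lt_trichotomy (i+1) (2*L) with h2 | h2 | h2
      · rw [show i = L + (i - L) by omega, g2 n (i - L) (by omega)]
        rw [show L + (i - L) + 1 = L + (i - L + 1) by omega, g2 n (i - L + 1) (by omega)]
        exact ih (i - L) (by omega)
      · rintro ⟨c1, -⟩
        rw [show i = L + (L - 1) by omega, g2 n (L - 1) (by omega)] at c1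
        have := last_zero n; rw [← hL] at this
        rw [this] at c1; exact absurd c1 (by decide)
      · rcases lt_trichotomy i (2*L) with h3 | h3 | h3
        · omega
        · rintro ⟨-, c2⟩
          rw [show i + 1 = 2*L + 1 + 0 by omega, g4 n 0 hLpos] at c2
          have := first_zero n; rw [this] at c2; exact absurd c2 (by decide)
        · rw [show i = 2*L + 1 + (i - (2*L+1)) by omega, g4 n _ (by omega)]
          rw [show 2*L + 1 + (i - (2*L+1)) + 1 = 2*L + 1 + (i - (2*L+1) + 1) by omega,
            g4 n _ (by omega)]
          exact ih _ (by omega)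

/-- no factor `0000` -/
lemma no0000 (n : ℕ) : ∀ i, i + 3 < (chaconWord n).length →
    ¬ ((chaconWord n).getD i 0 = 0 ∧ (chaconWord n).getD (i+1) 0 = 0 ∧
       (chaconWord n).getD (i+2) 0 = 0 ∧ (chaconWord n).getD (i+3) 0 = 0) := by
  induction n with
  | zero => intro i hi; simp [len_zero] at hi
  | succ n ih =>
    intro i hi
    rcases Nat.eq_zero_or_pos n with h0 | h1
    · subst h0
      have hlen : (chaconWord 1).length = 4 := by decide
      rw [show (0:ℕ)+1 = 1 from rfl, hlen] at hi
      intro h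
      have hi0 : i = 0 := by omega
      subst hi0; revert h; decide
    set L := (chaconWord n).length with hL
    have hL4 := one_ge n h1
    rw [len_succ] at hi
    rcases lt_trichotomy (i+3) L with h | h | h
    · rw [g1 n i (by omega), g1 n (i+1) (by omega), g1 n (i+2) (by omega), g1 n (i+3) h]
      exact ih i h
    · -- i + 3 = L : window contains position L-2, letter 1
      rintro ⟨c0, c1, c2, -⟩
      rw [g1 n (i+1) (by omega)] at c1
      have h1' := sublast_one n h1; rw [← hL] at h1'
      rw [show i + 1 = L - 2 by omega] at c1
      rw [h1'] at c1; exact absurd c1 (by decide)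
    · rcases lt_or_ge i L with hA | hA
      · -- straddles first junction, i ≤ L-1, i+3 ≥ L+1
        have h1' := sublast_one n h1; rw [← hL] at h1'
        rcases lt_trichotomy i (L - 2) with hB | hB | hB
        · -- i = L - 3 impossible? i < L-2 and i + 3 > L means i > L - 3: contradiction
          omega
        · -- i = L-2 : position i is L-2, letter 1
          rintro ⟨c0, -⟩
          rw [g1 n i (by omega), hB, h1'] at c0; exact absurd c0 (by decide)
        · -- i = L-1 : position i+3 = L+2 ↦ copy2 index 2, letter 1
          have hi' : i = L - 1 := by omega
          rintro ⟨-, -, -, c3⟩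
          rw [show i + 3 = L + 2 by omega, g2 n 2 (by omega), getD2_one n h1] at c3
          exact absurd c3 (by decide)
      · -- L ≤ i
        rcases lt_trichotomy (i+3) (2*L) with hB | hB | hB
        · rw [show i = L + (i-L) by omega, g2 n (i-L) (by omega),
            show L + (i-L) + 1 = L + (i-L+1) by omega, g2 n _ (by omega),
            show L + (i-L) + 2 = L + (i-L+2) by omega, g2 n _ (by omega),
            show L + (i-L) + 3 = L + (i-L+3) by omega, g2 n _ (by omega)]
          exact ih _ (by omega)
        · -- i+3 = 2L: position i+1 = 2L - 2 ↦ copy2 index L-2, letter 1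
          rintro ⟨-, c1, -, -⟩
          have h1' := sublast_one n h1; rw [← hL] at h1'
          rw [show i + 1 = L + (L - 2) by omega, g2 n (L-2) (by omega), h1'] at c1
          exact absurd c1 (by decide)
        · rcases le_or_gt i (2*L) with hC | hC
          · -- window contains the separator at 2L
            rintro ⟨c0, c1, c2, c3⟩
            have hg := g3 n; rw [← hL] at hg
            rcases (show i = 2*L ∨ i+1 = 2*L ∨ i+2 = 2*L ∨ i+3 = 2*L by omega) with
              e | e | e | e
            · rw [e, hg] at c0; exact absurd c0 (by decide)
            · rw [e, hg] at c1; exact absurd c1 (by decide)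
            · rw [e, hg] at c2; exact absurd c2 (by decide)
            · rw [e, hg] at c3; exact absurd c3 (by decide)
          · -- third copy
            rw [show i = 2*L+1 + (i - (2*L+1)) by omega, g4 n _ (by omega),
              show 2*L+1 + (i - (2*L+1)) + 1 = 2*L+1 + (i - (2*L+1) + 1) by omega,
              g4 n _ (by omega),
              show 2*L+1 + (i - (2*L+1)) + 2 = 2*L+1 + (i - (2*L+1) + 2) by omega,
              g4 n _ (by omega),
              show 2*L+1 + (i - (2*L+1)) + 3 = 2*L+1 + (i - (2*L+1) + 3) by omega,
              g4 n _ (by omega)]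
            exact ih _ (by omega)

end Chacon

namespace Chacon

lemma card_filter_getD (l : List (Fin 2)) :
    ((Finset.range l.length).filter fun i => l.getD i 0 = 0).card = l.count 0 := by
  induction l using List.reverseRecOn with
  | nil => simp
  | append_singleton l a ih =>
    rw [List.length_append, List.length_singleton, Finset.range_add_one, Finset.filter_insert]
    have hcong : ((Finset.range l.length).filter fun i => (l ++ [a]).getD i 0 = 0)
        = (Finset.range l.length).filter fun i => l.getD i 0 = 0 := by
      apply Finset.filter_congr
      intro i hi
      rw [Finset.mem_range] at hi
      rw [List.getD_append _ _ _ _ hi]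
    have hlast : (l ++ [a]).getD l.length 0 = a := by
      rw [List.getD_append_right _ _ _ _ (le_refl _)]
      simp
    rw [hlast, List.count_append]
    by_cases ha : a = 0
    · rw [if_pos ha, Finset.card_insert_of_notMem (by simp), hcong, ih]
      subst ha; simp
    · rw [if_neg ha, hcong, ih]
      have : (0 : Fin 2) ≠ a := fun h => ha h.symm
      simp [List.count_singleton, ha]


lemma count0 (n : ℕ) : (chaconWord n).count 0 = 3 ^ n := by
  induction n with
  | zero => rfl
  | succ n ih =>
    rw [succ_eq, List.count_append, List.count_append, List.count_append, ih]
    have : List.count (0 : Fin 2) [1] = 0 := by decide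
    rw [this]
    ring

lemma zeros_card (n : ℕ) :
    ((Finset.range (chaconWord n).length).filter fun i => (chaconWord n).getD i 0 = 0).card
      = 3 ^ n := by
  rw [card_filter_getD, count0]

end Chacon

namespace Chacon

lemma bezout_mod (q L : ℕ) (hL : 0 < L) :
    ∃ t : ℕ, (t * q) % L = (Nat.gcd q L) % L := by
  set a := Nat.gcdA q L
  set b := Nat.gcdB q L
  have hd : (Nat.gcd q L : ℤ) = q * a + L * b := Nat.gcd_eq_gcd_ab q L
  have hLZ : (L : ℤ) ≠ 0 := by exact_mod_cast hL.ne'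
  refine ⟨(a % (L : ℤ)).toNat, ?_⟩
  have ht : ((a % (L : ℤ)).toNat : ℤ) = a % L :=
    Int.toNat_of_nonneg (Int.emod_nonneg a hLZ)
  have key : (((a % (L : ℤ)).toNat * q : ℕ) : ℤ) % L = ((Nat.gcd q L : ℤ)) % L := by
    push_cast
    rw [ht]
    conv_lhs => rw [Int.mul_emod, Int.emod_emod_of_dvd a dvd_rfl]
    rw [← Int.mul_emod, hd]
    rw [show (q : ℤ) * a + L * b = a * q + b * L by ring]
    simp [Int.add_mul_emod_self_right]
  exact_mod_cast key

lemma rot_contra (l : List (Fin 2)) (n : ℕ) (hz : l.count 0 = 3 ^ n)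
    (hL3 : l.length % 3 = 1) (q : ℕ) (hq0 : 0 < q) (hq : q < l.length)
    (E : ∀ k < l.length, l.getD k 0 = l.getD ((k + q) % l.length) 0) : False := by
  set L := l.length with hLdef
  have hL : 0 < L := by omega
  -- iterate
  have Et : ∀ t : ℕ, ∀ k < L, l.getD k 0 = l.getD ((k + t * q) % L) 0 := by
    intro t
    induction t with
    | zero => intro k hk; simp [Nat.mod_eq_of_lt hk]
    | succ t ih =>
      intro k hk
      have h1 := ih k hk
      have h2 := E ((k + t * q) % L) (Nat.mod_lt _ hL)
      rw [Nat.mod_add_mod] at h2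
      rw [h1, h2]
      congr 2
      ring
  set d := Nat.gcd q L with hddef
  have hd0 : 0 < d := Nat.gcd_pos_of_pos_right q hL
  have hdq : d ≤ q := Nat.le_of_dvd hq0 (Nat.gcd_dvd_left q L)
  have hdL : d ∣ L := Nat.gcd_dvd_right q L
  have hdltL : d < L := lt_of_le_of_lt hdq hq
  obtain ⟨t, htq⟩ := bezout_mod q L hL
  have Ed : ∀ k < L, l.getD k 0 = l.getD ((k + d) % L) 0 := by
    intro k hk
    have h1 := Et t k hk
    rw [Nat.add_mod, htq, ← Nat.add_mod] at h1
    exact h1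
  have Emod : ∀ k, k < L → l.getD k 0 = l.getD (k % d) 0 := by
    intro k
    induction k using Nat.strong_induction_on with
    | _ k ih =>
      intro hk
      rcases lt_or_ge k d with h | h
      · rw [Nat.mod_eq_of_lt h]
      · have hk' : k - d < k := by omega
        have hk'' : k - d < L := by omega
        have e1 := Ed (k - d) hk''
        rw [show k - d + d = k by omega, Nat.mod_eq_of_lt hk] at e1
        rw [← e1, ih (k - d) hk' hk'', Nat.mod_eq_sub_mod h]
  -- cardinality
  have hcard :
      ((Finset.range L).filter fun i => l.getD i 0 = 0).card
        = (L / d) * ((Finset.range d).filter fun r => l.getD r 0 = 0).card := by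
    rw [← Finset.card_range (L / d), ← Finset.card_product]
    apply Finset.card_bij' (fun i _ => (i / d, i % d)) (fun p _ => p.1 * d + p.2)
    · intro i hi
      simp only [Finset.mem_filter, Finset.mem_range] at hi ⊢
      rw [Finset.mem_product]
      refine ⟨?_, ?_⟩
      · simp only [Finset.mem_range]
        exact Nat.div_lt_div_of_lt_of_dvd hdL hi.1
      · simp only [Finset.mem_filter, Finset.mem_range]
        exact ⟨Nat.mod_lt _ hd0, by rw [← Emod i hi.1, hi.2]⟩
    · rintro ⟨t', r⟩ hp
      rw [Finset.mem_product] at hp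
      simp only [Finset.mem_range, Finset.mem_filter] at hp
      obtain ⟨ht', hr, hr0⟩ := hp
      have hlt : t' * d + r < L := by
        have h1 : t' + 1 ≤ L / d := ht'
        have h2 : (t' + 1) * d ≤ (L / d) * d := Nat.mul_le_mul_right d h1
        rw [Nat.div_mul_cancel hdL] at h2
        nlinarith [hr]
      simp only [Finset.mem_filter, Finset.mem_range]
      refine ⟨hlt, ?_⟩
      rw [Emod _ hlt, show t' * d + r = r + t' * d by ring, Nat.add_mul_mod_self_right,
        Nat.mod_eq_of_lt hr]
      exact hr0
    · intro i hi
      exact Nat.div_add_mod' i d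
    · rintro ⟨t', r⟩ hp
      rw [Finset.mem_product] at hp
      simp only [Finset.mem_range, Finset.mem_filter] at hp
      obtain ⟨ht', hr, hr0⟩ := hp
      simp only [Prod.mk.injEq]
      constructor
      · rw [show t' * d + r = d * t' + r by ring, Nat.mul_add_div hd0, Nat.div_eq_of_lt hr]
        omega
      · rw [show t' * d + r = r + t' * d by ring, Nat.add_mul_mod_self_right,
          Nat.mod_eq_of_lt hr]
  have hcount : ((Finset.range L).filter fun i => l.getD i 0 = 0).card = 3 ^ n := by
    rw [← hz]
    exact card_filter_getD l
  have hdvd1 : (L / d) ∣ 3 ^ n := ⟨_, by rw [← hcount, hcard]⟩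
  have hdvd2 : (L / d) ∣ L := ⟨d, (Nat.div_mul_cancel hdL).symm⟩
  have hcop : Nat.Coprime L 3 := by
    have h3 : ¬ (3 ∣ L) := by
      rintro ⟨c, hc⟩
      rw [hc] at hL3
      simp [Nat.mul_mod_right] at hL3
    exact Nat.Coprime.symm ((Nat.prime_three).coprime_iff_not_dvd.mpr h3)
  have hcoppow : Nat.Coprime L (3 ^ n) := hcop.pow_right n
  have hone : (L / d) ∣ 1 := by
    rw [← hcoppow]
    exact Nat.dvd_gcd hdvd2 hdvd1
  have hLd : L = d := by
    have h2 := Nat.div_mul_cancel hdL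
    rw [Nat.dvd_one.mp hone] at h2
    omega
  omega
end Chacon


namespace Chacon

lemma len_strict : StrictMono (fun n => (chaconWord n).length) := by
  apply strictMono_nat_of_lt_succ
  intro n
  simp only [len_succ]
  have := len_pos n
  omega

lemma fin2_cases (x : Fin 2) : x = 0 ∨ x = 1 := by omega

lemma csub_chacon (n m : ℕ) :
    csub (chaconWord n) (chaconWord m) = chaconWord (n + m) := by
  induction m with
  | zero => simp [csub, cf, chaconWord]
  | succ m ih =>
    have : chaconWord (m + 1) = chaconWord m ++ chaconWord m ++ [1] ++ chaconWord m := rfl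
    rw [this, csub_append, csub_append, csub_append, ih]
    have h1 : csub (chaconWord n) [1] = [1] := by simp [csub, cf]
    rw [h1]
    rfl

lemma four_len (n : ℕ) :
    (chaconWord n ++ chaconWord n ++ chaconWord n ++ chaconWord n).length
      = 4 * (chaconWord n).length := by
  simp; ring

lemma four_getD (n k : ℕ) (hk : k < 4 * (chaconWord n).length) :
    (chaconWord n ++ chaconWord n ++ chaconWord n ++ chaconWord n).getD k 0
      = (chaconWord n).getD (k % (chaconWord n).length) 0 := by
  set b := chaconWord n with hb
  set L := b.length with hL
  have hLpos : 0 < L := len_pos n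
  rcases lt_or_ge k L with h1 | h1
  · rw [List.getD_append _ _ _ _ (by simp; omega), List.getD_append _ _ _ _ (by simp; omega),
      List.getD_append _ _ _ _ h1, Nat.mod_eq_of_lt h1]
  rcases lt_or_ge k (2*L) with h2 | h2
  · rw [List.getD_append _ _ _ _ (by simp; omega), List.getD_append _ _ _ _ (by simp; omega),
      List.getD_append_right _ _ _ _ h1]
    rw [Nat.mod_eq_sub_mod h1, Nat.mod_eq_of_lt (by omega)]
  rcases lt_or_ge k (3*L) with h3 | h3
  · rw [List.getD_append _ _ _ _ (by simp; omega),
      List.getD_append_right _ _ _ _ (by simp; omega)]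
    have e : k - (b ++ b).length = k - 2*L := by simp; omega
    rw [e, Nat.mod_eq_sub_mod h1, Nat.mod_eq_sub_mod (by omega), Nat.mod_eq_of_lt (by omega)]
    congr 1
    omega
  · rw [List.getD_append_right _ _ _ _ (by simp; omega)]
    have e : k - (b ++ b ++ b).length = k - 3*L := by simp; omega
    rw [e, Nat.mod_eq_sub_mod h1, Nat.mod_eq_sub_mod (by omega), Nat.mod_eq_sub_mod (by omega),
      Nat.mod_eq_of_lt (by omega)]
    congr 1
    omega

lemma align (n q : ℕ)
    (h : OccursAt (chaconWord n) (chaconWord n ++ chaconWord n ++ chaconWord n ++ chaconWord n) q) :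
    (chaconWord n).length ∣ q := by
  obtain ⟨hlen, hocc⟩ := h
  set b := chaconWord n with hb
  set L := b.length with hL
  have hLpos : 0 < L := len_pos n
  rw [four_len] at hlen
  by_cases hq : q % L = 0
  · exact Nat.dvd_of_mod_eq_zero hq
  exfalso
  apply rot_contra b n (count0 n) (len_mod3 n) (q % L) (Nat.pos_of_ne_zero hq)
    (Nat.mod_lt _ hLpos)
  intro k hk
  have h1 := hocc k hk
  rw [four_getD n (q + k) (by omega)] at h1
  rw [← h1]
  congr 1
  conv_rhs => rw [Nat.add_mod, Nat.mod_mod_of_dvd q dvd_rfl, ← Nat.add_mod]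
  rw [Nat.add_comm q k]

theorem not_occurs_finite (n N j : ℕ) :
    ¬ OccursAt (chaconWord n ++ chaconWord n ++ chaconWord n ++ chaconWord n)
        (chaconWord N) j := by
  rintro ⟨hlen, hocc⟩
  set L := (chaconWord n).length with hL
  have hLpos : 0 < L := len_pos n
  rw [four_len] at hlen
  have hnN : n ≤ N := by
    by_contra hc
    have := len_strict (show N < n by omega)
    simp only at this
    omega
  obtain ⟨m, rfl⟩ : ∃ m, N = n + m := ⟨N - n, by omega⟩
  set b := chaconWord n with hb
  set u := chaconWord m with hu
  have hsub : csub b u = chaconWord (n + m) := csub_chacon n m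
  have hcsl : (csub b u).length = (chaconWord (n + m)).length := by rw [hsub]
  have hclen : j + 4 * L ≤ (csub b u).length := by omega
  have h4 : ∀ k, k < 4 * L → (csub b u).getD (j + k) 0 = b.getD (k % L) 0 := by
    intro k hk
    rw [hsub, hocc k (by rw [four_len]; exact hk), four_getD n k hk]
  -- helper: item index below length
  have idx_lt : ∀ t, cpos b u t < (csub b u).length → t < u.length := by
    intro t ht
    by_contra hc
    have h1 : cpos b u u.length ≤ cpos b u t := cpos_mono b u (by omega)
    rw [cpos_length] at h1
    omega
  -- a block item fully inside the window is aligned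
  have block_occ : ∀ i δ, i < u.length → u.getD i 0 = 0 → cpos b u i = j + δ →
      δ + L ≤ 4 * L → L ∣ δ := by
    intro i δ hi hu0 hcp hδ
    apply align n δ
    constructor
    · rw [four_len]; exact hδ
    intro r hr
    have h1 := item_getD b u i r hi (by rw [hu0, cf_zero]; exact hr)
    rw [hu0, cf_zero, hcp] at h1
    have h2 := h4 (δ + r) (by omega)
    rw [show j + δ + r = j + (δ + r) by ring] at h1
    have h5 : (chaconWord n ++ chaconWord n ++ chaconWord n ++ chaconWord n).getD (δ + r) 0
        = b.getD ((δ + r) % L) 0 := four_getD n (δ + r) (by omega)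
    rw [h5, ← h2, h1]
  have one_item : ∀ i, i < u.length → u.getD i 0 = 1 →
      (csub b u).getD (cpos b u i) 0 = 1 := by
    intro i hi hu1
    have h1 := item_getD b u i 0 hi (by rw [hu1, cf_one]; simp)
    rw [hu1, cf_one] at h1
    simpa using h1
  -- find the item containing j
  obtain ⟨i0, hi0u, hi0le, hi0lt⟩ := exists_item b u j (by omega)
  rcases fin2_cases (u.getD i0 0) with hu0 | hu0
  swap
  · -- item containing j is a separator: j = cpos i0 and letter is 1
    have hp1 : cpos b u (i0 + 1) = cpos b u i0 + 1 := by
      rw [cpos_succ b u i0 hi0u, hu0, cf_one]; rfl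
    have hj : cpos b u i0 = j := by omega
    have h1 := one_item i0 hi0u hu0
    rw [hj] at h1
    have h2 := h4 0 (by omega)
    rw [Nat.add_zero, Nat.zero_mod, first_zero n] at h2
    rw [h1] at h2
    exact absurd h2 (by decide)
  · have hp1 : cpos b u (i0 + 1) = cpos b u i0 + L := by
      rw [cpos_succ b u i0 hi0u, hu0, cf_zero]
    have ho : j < cpos b u i0 + L := by omega
    set o := j - cpos b u i0 with hodef
    have hoL : o < L := by omega
    rcases Nat.eq_zero_or_pos o with ho0 | ho0
    · -- aligned start: chain of four blocks
      have hcp0 : cpos b u i0 = j + 0 * L := by omega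
      have step : ∀ i t, t ≤ 2 → i < u.length → u.getD i 0 = 0 → cpos b u i = j + t * L →
          (i + 1 < u.length ∧ u.getD (i+1) 0 = 0 ∧ cpos b u (i+1) = j + (t+1) * L) := by
        intro i t ht hi hui hcp
        have hp : cpos b u (i + 1) = j + (t+1) * L := by
          rw [cpos_succ b u i hi, hui, cf_zero, ← hL, hcp]
          ring
        have hi1 : i + 1 < u.length := by
          apply idx_lt
          rw [hp]
          have : (t+1) * L ≤ 3 * L := by nlinarith
          omega
        refine ⟨hi1, ?_, hp⟩
        rcases fin2_cases (u.getD (i+1) 0) with h | h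
        · exact h
        exfalso
        have h1 := one_item (i+1) hi1 h
        rw [hp] at h1
        have h2 := h4 ((t+1) * L) (by nlinarith)
        rw [Nat.mul_mod_left, first_zero n] at h2
        rw [h1] at h2
        exact absurd h2 (by decide)
      obtain ⟨ha1, hb1, hc1⟩ := step i0 0 (by omega) hi0u hu0 hcp0
      obtain ⟨ha2, hb2, hc2⟩ := step (i0+1) 1 (by omega) ha1 hb1 hc1
      obtain ⟨ha3, hb3, hc3⟩ := step (i0+2) 2 (by omega) ha2 hb2 hc2
      exact no0000 m i0 (by rw [← hu]; omega) ⟨hu0, hb1, by rw [show i0+1+1 = i0+2 from rfl] at hb2; exact hb2,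
        by rw [show i0+1+1+1 = i0+3 from rfl] at hb3; exact hb3⟩
    · -- misaligned start
      set δ := L - o with hδdef
      have hδpos : 0 < δ := by omega
      have hδlt : δ < L := by omega
      have hcp1 : cpos b u (i0 + 1) = j + δ := by omega
      have hi1 : i0 + 1 < u.length := by
        apply idx_lt
        rw [hcp1]
        omega
      rcases fin2_cases (u.getD (i0+1) 0) with h1 | h1
      · -- block at misaligned offset
        have := block_occ (i0+1) δ hi1 h1 hcp1 (by omega)
        have := Nat.le_of_dvd hδpos this
        omega
      · -- separator at offset δ
        have hsep := one_item (i0+1) hi1 h1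
        rw [hcp1] at hsep
        have hp2 : cpos b u (i0 + 2) = j + δ + 1 := by
          rw [show i0 + 2 = (i0 + 1) + 1 from rfl, cpos_succ b u (i0+1) hi1, h1, cf_one, hcp1]
          rfl
        have hi2 : i0 + 2 < u.length := by
          apply idx_lt
          rw [hp2]
          omega
        rcases fin2_cases (u.getD (i0+2) 0) with h2 | h2
        · -- block forced to δ + 1, so δ = L - 1
          have hdvd := block_occ (i0+2) (δ+1) hi2 h2 (by omega) (by omega)
          have hle := Nat.le_of_dvd (by omega) hdvd
          have hδe : δ = L - 1 := by omega
          have hlast : b.getD (L - 1) 0 = 0 := last_zero n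
          have h3 := h4 δ (by omega)
          rw [Nat.mod_eq_of_lt hδlt, hδe, hlast] at h3
          rw [hδe] at hsep
          rw [hsep] at h3
          exact absurd h3 (by decide)
        · -- two adjacent separators
          exact no11 m (i0+1) (by rw [← hu]; omega)
            ⟨h1, by rw [show i0+1+1 = i0+2 from rfl]; exact h2⟩

end Chacon


theorem chacon_no_fourfold (W : ℕ → Fin 2) (hW : IsChaconInfWord W) (n j : ℕ) :
    ¬ OccursAtInf W (chaconWord n ++ chaconWord n ++ chaconWord n ++ chaconWord n) j := by
  intro hocc
  have hNlen := Chacon.len_ge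
    (j + (chaconWord n ++ chaconWord n ++ chaconWord n ++ chaconWord n).length)
  apply Chacon.not_occurs_finite n
    (j + (chaconWord n ++ chaconWord n ++ chaconWord n ++ chaconWord n).length) j
  refine ⟨by omega, ?_⟩
  intro k hk
  have h1 := hW (j + (chaconWord n ++ chaconWord n ++ chaconWord n ++ chaconWord n).length)
    (j + k) (by omega)
  rw [← h1]
  exact hocc k hk
end

section
/- For every n, if β is a subword of the infinite word W of length |Wₙ| (i.e., β(k) = W(j + k) for some position j and all 0 ≤ k < |Wₙ|) and β ≠ Wₙ, then d₀(Wₙ, β) > 1/6. -/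
open Filter

/-- mismatch count: positions where first word has 0 and second has 1. -/
def mism : List (Fin 2) → List (Fin 2) → ℕ
  | a :: as, b :: bs => (if a = 0 ∧ b = 1 then 1 else 0) + mism as bs
  | _, _ => 0

def famA (b : List (Fin 2)) (r : ℕ) : List (Fin 2) := b.drop r ++ b.take r
def famB (b : List (Fin 2)) (r : ℕ) : List (Fin 2) := b.drop r ++ 1 :: b.take (r - 1)

lemma mism_nil (a : List (Fin 2)) : mism a [] = 0 := by cases a <;> rfl

lemma mism_cons (a b : Fin 2) (as bs : List (Fin 2)) :
    mism (a :: as) (b :: bs) = (if a = 0 ∧ b = 1 then 1 else 0) + mism as bs := rfl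

lemma mism_append {x u : List (Fin 2)} (y v : List (Fin 2)) (h : x.length = u.length) :
    mism (x ++ y) (u ++ v) = mism x u + mism y v := by
  induction x generalizing u with
  | nil => cases u with
    | nil => simp [mism]
    | cons b bs => simp at h
  | cons a as ih =>
    cases u with
    | nil => simp at h
    | cons b bs =>
      simp only [List.cons_append, mism_cons, List.length_cons] at *
      rw [ih (by omega)]; ring

lemma chaconWord_succ (n : ℕ) :
    chaconWord (n + 1) = chaconWord n ++ (chaconWord n ++ 1 :: chaconWord n) := by
  show chaconWord n ++ chaconWord n ++ [1] ++ chaconWord n = _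
  simp

lemma chaconWord_length (n : ℕ) :
    (chaconWord (n + 1)).length = 3 * (chaconWord n).length + 1 := by
  rw [chaconWord_succ]; simp; ring

lemma chaconWord_length_pos (n : ℕ) : 1 ≤ (chaconWord n).length := by
  induction n with
  | zero => simp [chaconWord]
  | succ n ih => rw [chaconWord_length]; omega

/-- Splitting a word at a position `q - 1` (for `1 ≤ q ≤ length`). -/
lemma split1 (b : List (Fin 2)) (q : ℕ) (h1 : 1 ≤ q) (h2 : q ≤ b.length) :
    ∃ (u v : List (Fin 2)) (m : Fin 2),
      b = u ++ m :: v ∧ b.take (q - 1) = u ∧ b.take q = u ++ [m] ∧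
      b.drop (q - 1) = m :: v ∧ b.drop q = v ∧ u.length = q - 1 ∧ v.length = b.length - q := by
  have hq : q - 1 < b.length := by omega
  have hq1 : q - 1 + 1 = q := by omega
  have hd : b.drop (q - 1) = b[q - 1] :: b.drop q := by
    rw [List.drop_eq_getElem_cons hq, hq1]
  have hb : b = b.take (q - 1) ++ b[q - 1] :: b.drop q := by
    conv_lhs => rw [← List.take_append_drop (q - 1) b, hd]
  have hu : (b.take (q - 1)).length = q - 1 := by simp; omega
  have ht : b.take q = b.take (q - 1) ++ [b[q - 1]] := by
    conv_lhs => rw [hb]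
    rw [List.take_append, List.take_of_length_le (by omega), hu]
    congr 1
    have h3 : q - (q - 1) = 1 := by omega
    rw [h3]
    rfl
  exact ⟨_, _, _, hb, rfl, ht, hd, rfl, hu, by simp⟩

-- drop/take of `b ++ (b ++ 1 :: b)` in the three regions
section trip
variable (b : List (Fin 2))

lemma trip_drop_low {r : ℕ} (h : r ≤ b.length) :
    (b ++ (b ++ 1 :: b)).drop r = b.drop r ++ (b ++ 1 :: b) :=
  List.drop_append_of_le_length h

lemma trip_take_low {r : ℕ} (h : r ≤ b.length) :
    (b ++ (b ++ 1 :: b)).take r = b.take r :=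
  List.take_append_of_le_length h

lemma trip_drop_mid {q : ℕ} (h : q ≤ b.length) :
    (b ++ (b ++ 1 :: b)).drop (b.length + q) = b.drop q ++ 1 :: b := by
  rw [List.drop_append]
  simp [List.drop_append_of_le_length h]

lemma trip_take_mid {q : ℕ} (h : q ≤ b.length) :
    (b ++ (b ++ 1 :: b)).take (b.length + q) = b ++ b.take q := by
  rw [List.take_append]
  simp [List.take_append_of_le_length h]

lemma trip_drop_high {q : ℕ} :
    (b ++ (b ++ 1 :: b)).drop (2 * b.length + 1 + q) = b.drop q := by
  rw [List.drop_append]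
  simp only [List.drop_append]
  have e1 : 2 * b.length + 1 + q - b.length = b.length + 1 + q := by omega
  have e2 : b.length + 1 + q - b.length = 1 + q := by omega
  rw [e1, e2, List.drop_eq_nil_of_le (by omega), List.drop_eq_nil_of_le (by omega)]
  simp [Nat.add_comm 1 q]

lemma trip_take_high {q : ℕ} (h : q ≤ b.length) :
    (b ++ (b ++ 1 :: b)).take (2 * b.length + 1 + q) = b ++ (b ++ 1 :: b.take q) := by
  rw [List.take_append]
  rw [List.take_append]
  have e1 : 2 * b.length + 1 + q - b.length = b.length + 1 + q := by omega
  have e2 : b.length + 1 + q - b.length = 1 + q := by omega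
  rw [e1, e2, List.take_of_length_le (by omega), List.take_of_length_le (by omega)]
  simp [Nat.add_comm 1 q]

/-- additivity of `mism` against the triple word. -/
lemma trip_mism (w₀ w₁ w₂ : List (Fin 2)) (m : Fin 2)
    (h0 : w₀.length = b.length) (h1 : w₁.length = b.length) :
    mism (b ++ (b ++ 1 :: b)) (w₀ ++ (w₁ ++ m :: w₂)) =
      mism b w₀ + mism b w₁ + mism b w₂ := by
  rw [mism_append _ _ h0.symm, mism_append _ _ h1.symm, mism_cons]
  have : ¬((1 : Fin 2) = 0 ∧ m = 1) := by simp
  rw [if_neg this]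
  ring

end trip

lemma famA_length {b : List (Fin 2)} {r : ℕ} (h : r ≤ b.length) :
    (famA b r).length = b.length := by simp [famA]; omega

lemma famB_length {b : List (Fin 2)} {r : ℕ} (h1 : 1 ≤ r) (h2 : r ≤ b.length) :
    (famB b r).length = b.length := by simp [famB]; omega

/-- The inductive invariant for the counting lemma. -/
def Good (b : List (Fin 2)) (T : ℕ) : Prop :=
  (∀ r < b.length, 1 ≤ r → T ≤ mism b (famA b r)) ∧
  (∀ r ≤ b.length, 1 ≤ r → T ≤ mism b (famB b r)) ∧
  (3 * T - 1 ≤ mism b (famB b 1)) ∧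
  (3 * T - 1 ≤ mism b (famB b b.length)) ∧
  (3 * T - 2 ≤ mism b (famA b 1)) ∧
  (3 * T - 2 ≤ mism b (famA b (b.length - 1)))

lemma regA1 (b : List (Fin 2)) (r : ℕ) (h1 : 1 ≤ r) (h2 : r < b.length) :
    mism (b ++ (b ++ 1 :: b)) (famA (b ++ (b ++ 1 :: b)) r) =
      mism b (famA b r) + mism b (famB b r) + mism b (famA b r) := by
  obtain ⟨u, v, m, hb, ht1, ht, hd1, hd, hul, hvl⟩ := split1 b r h1 (by omega)
  have e : famA (b ++ (b ++ 1 :: b)) r = famA b r ++ (famB b r ++ m :: famA b r) := by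
    simp only [famA, famB, trip_drop_low b (le_of_lt h2), trip_take_low b (le_of_lt h2),
      ht1, ht, hd]
    rw [hb]
    simp [List.append_assoc]
  rw [e, trip_mism b _ _ _ _ (famA_length (by omega)) (famB_length h1 (by omega))]

lemma regA2 (b : List (Fin 2)) (hL : 1 ≤ b.length) :
    mism (b ++ (b ++ 1 :: b)) (famA (b ++ (b ++ 1 :: b)) b.length) =
      mism b b + mism b (famB b b.length) + mism b b := by
  obtain ⟨u, v, m, hb, ht1, ht, hd1, hd, hul, hvl⟩ := split1 b b.length hL le_rfl
  have hv : v = [] := by rw [← hd, List.drop_length]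
  subst hv
  have e : famA (b ++ (b ++ 1 :: b)) b.length = b ++ (famB b b.length ++ m :: b) := by
    simp only [famA, famB, trip_drop_low b le_rfl, trip_take_low b le_rfl,
      List.drop_length, List.take_length, ht1]
    rw [hb]
    simp [List.append_assoc]
  rw [e, trip_mism b _ _ _ _ rfl (famB_length hL le_rfl)]

lemma regA3a (b : List (Fin 2)) (hL : 1 ≤ b.length) :
    mism (b ++ (b ++ 1 :: b)) (famA (b ++ (b ++ 1 :: b)) (b.length + 1)) =
      mism b (famB b 1) + mism b b + mism b (famA b 1) := by
  obtain ⟨u, v, m, hb, ht1, ht, hd1, hd, hul, hvl⟩ := split1 b 1 le_rfl hL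
  have hu : u = [] := List.eq_nil_of_length_eq_zero hul
  subst hu
  have e : famA (b ++ (b ++ 1 :: b)) (b.length + 1) = famB b 1 ++ (b ++ m :: famA b 1) := by
    simp only [famA, famB, trip_drop_mid b hL, trip_take_mid b hL, ht1, ht, hd]
    rw [hb]
    simp [List.append_assoc]
  rw [e, trip_mism b _ _ _ _ (famB_length le_rfl hL) rfl]

lemma regA3 (b : List (Fin 2)) (q : ℕ) (h2 : 2 ≤ q) (h3 : q < b.length) :
    mism (b ++ (b ++ 1 :: b)) (famA (b ++ (b ++ 1 :: b)) (b.length + q)) =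
      mism b (famB b q) + mism b (famA b (q - 1)) + mism b (famA b q) := by
  obtain ⟨u, v, m, hb, ht1, ht, hd1, hd, hul, hvl⟩ := split1 b q (by omega) (by omega)
  have e : famA (b ++ (b ++ 1 :: b)) (b.length + q) =
      famB b q ++ (famA b (q - 1) ++ m :: famA b q) := by
    simp only [famA, famB, trip_drop_mid b (le_of_lt h3), trip_take_mid b (le_of_lt h3),
      ht1, ht, hd, hd1]
    rw [hb]
    simp [List.append_assoc]
  rw [e, trip_mism b _ _ _ _ (famB_length (by omega) (by omega)) (famA_length (by omega))]

lemma regA4 (b : List (Fin 2)) (hL : 1 ≤ b.length) :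
    mism (b ++ (b ++ 1 :: b)) (famA (b ++ (b ++ 1 :: b)) (b.length + b.length)) =
      mism b (famB b b.length) + mism b (famA b (b.length - 1)) + mism b b := by
  obtain ⟨u, v, m, hb, ht1, ht, hd1, hd, hul, hvl⟩ := split1 b b.length hL le_rfl
  have hv : v = [] := by rw [← hd, List.drop_length]
  subst hv
  have e : famA (b ++ (b ++ 1 :: b)) (b.length + b.length) =
      famB b b.length ++ (famA b (b.length - 1) ++ m :: b) := by
    simp only [famA, famB, trip_drop_mid b le_rfl, trip_take_mid b le_rfl,
      List.drop_length, List.take_length, ht1, hd1]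
    rw [hb]
    simp [List.append_assoc]
  rw [e, trip_mism b _ _ _ _ (famB_length hL le_rfl) (famA_length (by omega))]

lemma regA5 (b : List (Fin 2)) (hL : 1 ≤ b.length) :
    mism (b ++ (b ++ 1 :: b)) (famA (b ++ (b ++ 1 :: b)) (2 * b.length + 1)) =
      mism b b + mism b b + mism b (famB b 1) := by
  obtain ⟨u, v, m, hb, ht1, ht, hd1, hd, hul, hvl⟩ := split1 b 1 le_rfl hL
  have hu : u = [] := List.eq_nil_of_length_eq_zero hul
  subst hu
  have d0 := trip_drop_high b (q := 0)
  have t0 := trip_take_high b (q := 0) (by omega)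
  simp only [Nat.add_zero, List.drop_zero] at d0 t0
  have e : famA (b ++ (b ++ 1 :: b)) (2 * b.length + 1) = b ++ (b ++ m :: famB b 1) := by
    simp only [famA, famB, d0, t0, List.take_zero, ht1, hd]
    rw [hb]
    simp [List.append_assoc]
  rw [e, trip_mism b _ _ _ _ rfl rfl]

lemma regA6 (b : List (Fin 2)) (q : ℕ) (h1 : 1 ≤ q) (h2 : q < b.length) :
    mism (b ++ (b ++ 1 :: b)) (famA (b ++ (b ++ 1 :: b)) (2 * b.length + 1 + q)) =
      mism b (famA b q) + mism b (famA b q) + mism b (famB b (q + 1)) := by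
  obtain ⟨u, v, m, hb, ht1, ht, hd1, hd, hul, hvl⟩ := split1 b (q + 1) (by omega) (by omega)
  have ht1' : b.take q = u := by simpa using ht1
  have hd1' : b.drop q = m :: v := by simpa using hd1
  have e : famA (b ++ (b ++ 1 :: b)) (2 * b.length + 1 + q) =
      famA b q ++ (famA b q ++ m :: famB b (q + 1)) := by
    simp only [famA, famB, trip_drop_high b (q := q), trip_take_high b (le_of_lt h2),
      Nat.add_sub_cancel, ht1', hd1', hd]
    rw [hb]
    simp [List.append_assoc]
  rw [e, trip_mism b _ _ _ _ (famA_length (by omega)) (famA_length (by omega))]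

lemma regS1 (b : List (Fin 2)) (r : ℕ) (h1 : 1 ≤ r) (h2 : r < b.length) :
    mism (b ++ (b ++ 1 :: b)) (famB (b ++ (b ++ 1 :: b)) r) =
      mism b (famA b r) + mism b (famB b r) + mism b (famB b r) := by
  obtain ⟨u, v, m, hb, ht1, ht, hd1, hd, hul, hvl⟩ := split1 b r h1 (by omega)
  have e : famB (b ++ (b ++ 1 :: b)) r = famA b r ++ (famB b r ++ m :: famB b r) := by
    simp only [famA, famB, trip_drop_low b (le_of_lt h2),
      trip_take_low b (show r - 1 ≤ b.length by omega), ht1, ht, hd, hd1]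
    rw [hb]
    simp [List.append_assoc]
  rw [e, trip_mism b _ _ _ _ (famA_length (by omega)) (famB_length h1 (by omega))]

lemma regS2 (b : List (Fin 2)) (hL : 1 ≤ b.length) :
    mism (b ++ (b ++ 1 :: b)) (famB (b ++ (b ++ 1 :: b)) b.length) =
      mism b b + mism b (famB b b.length) + mism b (famB b b.length) := by
  obtain ⟨u, v, m, hb, ht1, ht, hd1, hd, hul, hvl⟩ := split1 b b.length hL le_rfl
  have hv : v = [] := by rw [← hd, List.drop_length]
  subst hv
  have e : famB (b ++ (b ++ 1 :: b)) b.length =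
      b ++ (famB b b.length ++ m :: famB b b.length) := by
    simp only [famB, trip_drop_low b le_rfl,
      trip_take_low b (show b.length - 1 ≤ b.length by omega), List.drop_length, ht1]
    rw [hb]
    simp [List.append_assoc]
  rw [e, trip_mism b _ _ _ _ rfl (famB_length hL le_rfl)]

lemma regS3 (b : List (Fin 2)) (hL : 1 ≤ b.length) :
    mism (b ++ (b ++ 1 :: b)) (famB (b ++ (b ++ 1 :: b)) (b.length + 1)) =
      mism b (famB b 1) + mism b b + mism b b := by
  obtain ⟨u, v, m, hb, ht1, ht, hd1, hd, hul, hvl⟩ := split1 b 1 le_rfl hL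
  have hu : u = [] := List.eq_nil_of_length_eq_zero hul
  subst hu
  have e : famB (b ++ (b ++ 1 :: b)) (b.length + 1) = famB b 1 ++ (b ++ (1 : Fin 2) :: b) := by
    simp only [famB, trip_drop_mid b hL, Nat.add_sub_cancel, List.take_left, ht1, hd]
    rw [hb]
    simp [List.append_assoc]
  rw [e, trip_mism b _ _ _ _ (famB_length le_rfl hL) rfl]

lemma regS4 (b : List (Fin 2)) (q : ℕ) (h2 : 2 ≤ q) (h3 : q ≤ b.length) :
    mism (b ++ (b ++ 1 :: b)) (famB (b ++ (b ++ 1 :: b)) (b.length + q)) =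
      mism b (famB b q) + mism b (famB b (q - 1)) + mism b (famA b (q - 1)) := by
  obtain ⟨u1, v1, m1, hb1, ht1a, hta, hd1a, hda, hul1, hvl1⟩ := split1 b q (by omega) h3
  obtain ⟨u2, v2, m2, hb2, ht1b, htb, hd1b, hdb, hul2, hvl2⟩ := split1 b (q - 1) (by omega) (by omega)
  have hv2 : v2 = m1 :: v1 := by rw [← hdb, hd1a]
  have hu1 : u1 = u2 ++ [m2] := by rw [← ht1a, htb]
  have e : famB (b ++ (b ++ 1 :: b)) (b.length + q) =
      famB b q ++ (famB b (q - 1) ++ m2 :: famA b (q - 1)) := by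
    simp only [famA, famB]
    have hidx : b.length + q - 1 = b.length + (q - 1) := by omega
    rw [hidx, trip_drop_mid b h3, trip_take_mid b (show q - 1 ≤ b.length by omega)]
    rw [ht1a, hd1a, hda, ht1b]
    rw [hu1, hb2, hv2]
    simp [List.append_assoc]
  rw [e, trip_mism b _ _ _ _ (famB_length (by omega) h3) (famB_length (by omega) (by omega))]

lemma regS5 (b : List (Fin 2)) (hL : 1 ≤ b.length) :
    mism (b ++ (b ++ 1 :: b)) (famB (b ++ (b ++ 1 :: b)) (2 * b.length + 1)) =
      mism b b + mism b (famB b b.length) + mism b b := by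
  obtain ⟨u, v, m, hb, ht1, ht, hd1, hd, hul, hvl⟩ := split1 b b.length hL le_rfl
  have hv : v = [] := by rw [← hd, List.drop_length]
  subst hv
  have d0 := trip_drop_high b (q := 0)
  simp only [Nat.add_zero, List.drop_zero] at d0
  have e : famB (b ++ (b ++ 1 :: b)) (2 * b.length + 1) =
      b ++ (famB b b.length ++ m :: b) := by
    simp only [famB]
    rw [d0]
    have hidx : 2 * b.length + 1 - 1 = b.length + b.length := by omega
    rw [hidx, trip_take_mid b le_rfl, List.take_length, ht1, List.drop_length]
    rw [hb]
    simp [List.append_assoc]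
  rw [e, trip_mism b _ _ _ _ rfl (famB_length hL le_rfl)]

lemma regS6 (b : List (Fin 2)) (hL : 1 ≤ b.length) :
    mism (b ++ (b ++ 1 :: b)) (famB (b ++ (b ++ 1 :: b)) (2 * b.length + 2)) =
      mism b (famB b 1) + mism b b + mism b (famB b 1) := by
  obtain ⟨u, v, m, hb, ht1, ht, hd1, hd, hul, hvl⟩ := split1 b 1 le_rfl hL
  have hu : u = [] := List.eq_nil_of_length_eq_zero hul
  subst hu
  have e : famB (b ++ (b ++ 1 :: b)) (2 * b.length + 2) =
      famB b 1 ++ (b ++ m :: famB b 1) := by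
    simp only [famB]
    have hi1 : 2 * b.length + 2 = 2 * b.length + 1 + 1 := by omega
    have hi2 : 2 * b.length + 2 - 1 = 2 * b.length + 1 + 0 := by omega
    rw [hi1, hi2, trip_drop_high b, trip_take_high b (by omega), hd, ht1]
    rw [hb]
    simp [List.append_assoc]
  rw [e, trip_mism b _ _ _ _ (famB_length le_rfl hL) rfl]

lemma regS7 (b : List (Fin 2)) (q : ℕ) (h2 : 2 ≤ q) (h3 : q ≤ b.length) :
    mism (b ++ (b ++ 1 :: b)) (famB (b ++ (b ++ 1 :: b)) (2 * b.length + 1 + q)) =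
      mism b (famB b q) + mism b (famA b (q - 1)) + mism b (famB b q) := by
  obtain ⟨u, v, m, hb, ht1, ht, hd1, hd, hul, hvl⟩ := split1 b q (by omega) h3
  have e : famB (b ++ (b ++ 1 :: b)) (2 * b.length + 1 + q) =
      famB b q ++ (famA b (q - 1) ++ m :: famB b q) := by
    simp only [famA, famB]
    have hidx : 2 * b.length + 1 + q - 1 = 2 * b.length + 1 + (q - 1) := by omega
    rw [hidx, trip_drop_high b, trip_take_high b (show q - 1 ≤ b.length by omega)]
    rw [ht1, hd, hd1]
    rw [hb]
    simp [List.append_assoc]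
  rw [e, trip_mism b _ _ _ _ (famB_length (by omega) h3) (famA_length (by omega))]

lemma good_step {b : List (Fin 2)} {T : ℕ} (hL : 2 ≤ b.length) (hT : 1 ≤ T) (hG : Good b T) :
    Good (b ++ (b ++ 1 :: b)) (3 * T - 1) := by
  obtain ⟨ha, hbB, hc, hd, he, hf⟩ := hG
  have hL1 : 1 ≤ b.length := by omega
  have hlen : (b ++ (b ++ 1 :: b)).length = 3 * b.length + 1 := by simp; ring
  have keyA : ∀ r, 1 ≤ r → r ≤ 3 * b.length →
      3 * T - 1 ≤ mism (b ++ (b ++ 1 :: b)) (famA (b ++ (b ++ 1 :: b)) r) := by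
    intro r h1 h2
    by_cases c1 : r < b.length
    · rw [regA1 b r h1 c1]
      have u1 := ha r c1 h1; have u2 := hbB r (by omega) h1
      omega
    by_cases c2 : r = b.length
    · subst c2; rw [regA2 b hL1]; omega
    by_cases c3 : r = b.length + 1
    · subst c3; rw [regA3a b hL1]; omega
    by_cases c4 : r < 2 * b.length
    · obtain ⟨q, rfl⟩ : ∃ q, r = b.length + q := ⟨r - b.length, by omega⟩
      rw [regA3 b q (by omega) (by omega)]
      have u1 := hbB q (by omega) (by omega)
      have u2 := ha (q - 1) (by omega) (by omega)
      have u3 := ha q (by omega) (by omega)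
      omega
    by_cases c5 : r = 2 * b.length
    · subst c5
      rw [show 2 * b.length = b.length + b.length by ring, regA4 b hL1]
      omega
    by_cases c6 : r = 2 * b.length + 1
    · subst c6; rw [regA5 b hL1]; omega
    · obtain ⟨q, rfl⟩ : ∃ q, r = 2 * b.length + 1 + q := ⟨r - (2 * b.length + 1), by omega⟩
      rw [regA6 b q (by omega) (by omega)]
      have u1 := ha q (by omega) (by omega)
      have u2 := hbB (q + 1) (by omega) (by omega)
      omega
  have keyB : ∀ r, 1 ≤ r → r ≤ 3 * b.length + 1 →
      3 * T - 1 ≤ mism (b ++ (b ++ 1 :: b)) (famB (b ++ (b ++ 1 :: b)) r) := by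
    intro r h1 h2
    by_cases c1 : r < b.length
    · rw [regS1 b r h1 c1]
      have u1 := ha r c1 h1; have u2 := hbB r (by omega) h1; omega
    by_cases c2 : r = b.length
    · subst c2; rw [regS2 b hL1]; omega
    by_cases c3 : r = b.length + 1
    · subst c3; rw [regS3 b hL1]; omega
    by_cases c4 : r ≤ 2 * b.length
    · obtain ⟨q, rfl⟩ : ∃ q, r = b.length + q := ⟨r - b.length, by omega⟩
      rw [regS4 b q (by omega) (by omega)]
      have u1 := hbB q (by omega) (by omega)
      have u2 := hbB (q - 1) (by omega) (by omega)
      have u3 := ha (q - 1) (by omega) (by omega)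
      omega
    by_cases c5 : r = 2 * b.length + 1
    · subst c5; rw [regS5 b hL1]; omega
    by_cases c6 : r = 2 * b.length + 2
    · subst c6; rw [regS6 b hL1]; omega
    · obtain ⟨q, rfl⟩ : ∃ q, r = 2 * b.length + 1 + q := ⟨r - (2 * b.length + 1), by omega⟩
      rw [regS7 b q (by omega) (by omega)]
      have u1 := hbB q (by omega) (by omega)
      have u2 := ha (q - 1) (by omega) (by omega)
      omega
  refine ⟨?_, ?_, ?_, ?_, ?_, ?_⟩
  · intro r hr h1
    have hr' : r < 3 * b.length + 1 := hlen ▸ hr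
    exact keyA r h1 (by omega)
  · intro r hr h1
    have hr' : r ≤ 3 * b.length + 1 := by rw [hlen] at hr; omega
    exact keyB r h1 hr'
  · rw [regS1 b 1 le_rfl (by omega)]
    omega
  · rw [hlen, show 3 * b.length + 1 = 2 * b.length + 1 + b.length by ring,
      regS7 b b.length hL le_rfl]
    omega
  · rw [regA1 b 1 le_rfl (by omega)]
    omega
  · rw [hlen, show 3 * b.length + 1 - 1 = 2 * b.length + 1 + (b.length - 1) by omega,
      regA6 b (b.length - 1) (by omega) (by omega)]
    have hidx : b.length - 1 + 1 = b.length := by omega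
    rw [hidx]
    omega

/-- the bound sequence: `Tn n = (3^(n+1) + 3)/6`. -/
def Tn : ℕ → ℕ
  | 0 => 1
  | n + 1 => 3 * Tn n - 1

lemma Tn_pos (n : ℕ) : 1 ≤ Tn n := by
  induction n with
  | zero => exact le_rfl
  | succ n ih => show 1 ≤ 3 * Tn n - 1; omega

lemma Tn_spec (n : ℕ) : 6 * Tn n = 3 ^ (n + 1) + 3 := by
  induction n with
  | zero => rfl
  | succ n ih =>
    have h := Tn_pos n
    show 6 * (3 * Tn n - 1) = 3 ^ (n + 2) + 3
    have : 3 ^ (n + 2) = 3 * 3 ^ (n + 1) := by ring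
    omega

lemma good_chacon : ∀ n, Good (chaconWord (n + 1)) (Tn n)
  | 0 => by unfold Good; decide
  | n + 1 => by
    rw [show chaconWord (n + 1 + 1) =
        chaconWord (n + 1) ++ (chaconWord (n + 1) ++ 1 :: chaconWord (n + 1)) from
      chaconWord_succ (n + 1)]
    exact good_step (by rw [chaconWord_length]; have := chaconWord_length_pos n; omega)
      (Tn_pos n) (good_chacon n)

def window (Y : List (Fin 2)) (j len : ℕ) : List (Fin 2) := (Y.drop j).take len

def Fam (n : ℕ) (w : List (Fin 2)) : Prop :=
  w = chaconWord n ∨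
  (∃ r, 1 ≤ r ∧ r < (chaconWord n).length ∧ w = famA (chaconWord n) r) ∨
  (∃ r, 1 ≤ r ∧ r ≤ (chaconWord n).length ∧ w = famB (chaconWord n) r)

lemma window_inner (P Q R : List (Fin 2)) (j len : ℕ) (h1 : P.length ≤ j)
    (h2 : j + len ≤ P.length + Q.length) :
    window (P ++ (Q ++ R)) j len = window Q (j - P.length) len := by
  unfold window
  rw [List.drop_append, List.drop_eq_nil_of_le h1, List.nil_append,
    List.drop_append,
    List.take_append_of_le_length (by simp [List.length_drop]; omega)]

lemma window_two (b : List (Fin 2)) (j : ℕ) (hj : j ≤ b.length) :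
    window (b ++ b) j b.length = b.drop j ++ b.take j := by
  unfold window
  rw [List.drop_append_of_le_length hj, List.take_append,
    List.take_of_length_le (by simp)]
  congr 1
  have h : b.length - (b.drop j).length = j := by simp; omega
  rw [h]

lemma window_spacer (b : List (Fin 2)) (j : ℕ) (h1 : 1 ≤ j) (hj : j ≤ b.length) :
    window (b ++ 1 :: b) j b.length = b.drop j ++ 1 :: b.take (j - 1) := by
  unfold window
  rw [List.drop_append_of_le_length hj, List.take_append,
    List.take_of_length_le (by simp)]
  congr 1
  have h : b.length - (b.drop j).length = j := by simp; omega
  rw [h]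
  obtain ⟨j', rfl⟩ : ∃ j', j = j' + 1 := ⟨j - 1, by omega⟩
  simp

lemma window_spacer_zero (b : List (Fin 2)) :
    window (b ++ 1 :: b) 0 b.length = b := by
  unfold window
  rw [List.drop_zero, List.take_append_of_le_length le_rfl, List.take_length]

lemma window_spacer_last (b : List (Fin 2)) :
    window (b ++ 1 :: b) (b.length + 1) b.length = b := by
  unfold window
  rw [List.drop_append, List.drop_eq_nil_of_le (by omega), List.nil_append,
    show b.length + 1 - b.length = 1 by omega]
  simp

lemma chaconWord_length_mono (n k : ℕ) :
    (chaconWord n).length ≤ (chaconWord (n + k)).length := by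
  induction k with
  | zero => exact le_rfl
  | succ k ih =>
    rw [show n + (k + 1) = n + k + 1 from rfl, chaconWord_length (n + k)]
    omega

lemma structYZ (n : ℕ) : ∀ k j,
    (j + (chaconWord n).length ≤ 2 * (chaconWord (n + k)).length →
      Fam n (window (chaconWord (n + k) ++ chaconWord (n + k)) j (chaconWord n).length)) ∧
    (j + (chaconWord n).length ≤ 2 * (chaconWord (n + k)).length + 1 →
      Fam n (window (chaconWord (n + k) ++ 1 :: chaconWord (n + k)) j (chaconWord n).length)) := by
  intro k
  induction k with
  | zero =>
    intro j
    simp only [Nat.add_zero]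
    constructor
    · intro hj
      have hjL : j ≤ (chaconWord n).length := by omega
      rw [window_two _ j hjL]
      by_cases h0 : j = 0
      · subst h0; left; simp
      by_cases hL : j = (chaconWord n).length
      · subst hL; left; simp
      · right; left; exact ⟨j, by omega, by omega, rfl⟩
    · intro hj
      by_cases h0 : j = 0
      · subst h0; left; exact window_spacer_zero _
      by_cases hL : j = (chaconWord n).length + 1
      · subst hL; left; exact window_spacer_last _
      · have h1 : 1 ≤ j := by omega
        have hjL : j ≤ (chaconWord n).length := by
          have := chaconWord_length_pos n; omega
        rw [window_spacer _ j h1 hjL]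
        right; right; exact ⟨j, h1, hjL, rfl⟩
  | succ k ih =>
    intro j
    have hmono := chaconWord_length_mono n k
    have hpos := chaconWord_length_pos (n + k)
    rw [show n + (k + 1) = n + k + 1 from rfl]
    constructor
    · intro hj
      rw [chaconWord_length (n + k)] at hj
      set A := chaconWord (n + k) with hA
      set L := (chaconWord n).length with hLdef
      clear_value A L
      by_cases c1 : j + L ≤ 2 * A.length
      · rw [show chaconWord (n + k + 1) ++ chaconWord (n + k + 1) =
            [] ++ ((A ++ A) ++ ([1] ++ (A ++ (A ++ (A ++ ([1] ++ A)))))) from by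
          rw [chaconWord_succ, ← hA]; simp,
          window_inner _ _ _ j L (by simp) (by (try simp); omega)]
        exact (ih (j - ([] : List (Fin 2)).length)).1 (by (try simp); omega)
      by_cases c2 : j + L ≤ 3 * A.length + 1
      · have hPj : A.length ≤ j := by omega
        rw [show chaconWord (n + k + 1) ++ chaconWord (n + k + 1) =
            A ++ ((A ++ 1 :: A) ++ (A ++ (A ++ ([1] ++ A)))) from by
          rw [chaconWord_succ, ← hA]; simp,
          window_inner _ _ _ j L (by (try simp); omega) (by (try simp); omega)]
        exact (ih (j - A.length)).2 (by (try simp); omega)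
      by_cases c3 : j + L ≤ 4 * A.length + 1
      · have hPj : 2 * A.length + 1 ≤ j := by omega
        rw [show chaconWord (n + k + 1) ++ chaconWord (n + k + 1) =
            (A ++ (A ++ [1])) ++ ((A ++ A) ++ (A ++ ([1] ++ A))) from by
          rw [chaconWord_succ, ← hA]; simp,
          window_inner _ _ _ j L (by (try simp); omega) (by (try simp); omega)]
        exact (ih (j - (A ++ (A ++ [1])).length)).1 (by (try simp); omega)
      by_cases c4 : j + L ≤ 5 * A.length + 1
      · have hPj : 3 * A.length + 1 ≤ j := by omega
        rw [show chaconWord (n + k + 1) ++ chaconWord (n + k + 1) =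
            (A ++ (A ++ ([1] ++ A))) ++ ((A ++ A) ++ ([1] ++ A)) from by
          rw [chaconWord_succ, ← hA]; simp,
          window_inner _ _ _ j L (by (try simp); omega) (by (try simp); omega)]
        exact (ih (j - (A ++ (A ++ ([1] ++ A))).length)).1 (by (try simp); omega)
      · have hPj : 4 * A.length + 1 ≤ j := by omega
        rw [show chaconWord (n + k + 1) ++ chaconWord (n + k + 1) =
            (A ++ (A ++ ([1] ++ (A ++ A)))) ++ ((A ++ 1 :: A) ++ []) from by
          rw [chaconWord_succ, ← hA]; simp,
          window_inner _ _ _ j L (by (try simp); omega) (by (try simp); omega)]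
        exact (ih (j - (A ++ (A ++ ([1] ++ (A ++ A)))).length)).2 (by (try simp); omega)
    · intro hj
      rw [chaconWord_length (n + k)] at hj
      set A := chaconWord (n + k) with hA
      set L := (chaconWord n).length with hLdef
      clear_value A L
      by_cases c1 : j + L ≤ 2 * A.length
      · rw [show chaconWord (n + k + 1) ++ 1 :: chaconWord (n + k + 1) =
            [] ++ ((A ++ A) ++ ([1] ++ (A ++ ([1] ++ (A ++ (A ++ ([1] ++ A))))))) from by
          rw [chaconWord_succ, ← hA]; simp,
          window_inner _ _ _ j L (by simp) (by (try simp); omega)]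
        exact (ih (j - ([] : List (Fin 2)).length)).1 (by (try simp); omega)
      by_cases c2 : j + L ≤ 3 * A.length + 1
      · have hPj : A.length ≤ j := by omega
        rw [show chaconWord (n + k + 1) ++ 1 :: chaconWord (n + k + 1) =
            A ++ ((A ++ 1 :: A) ++ ([1] ++ (A ++ (A ++ ([1] ++ A))))) from by
          rw [chaconWord_succ, ← hA]; simp,
          window_inner _ _ _ j L (by (try simp); omega) (by (try simp); omega)]
        exact (ih (j - A.length)).2 (by (try simp); omega)
      by_cases c3 : j + L ≤ 4 * A.length + 2
      · have hPj : 2 * A.length + 1 ≤ j := by omega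
        rw [show chaconWord (n + k + 1) ++ 1 :: chaconWord (n + k + 1) =
            (A ++ (A ++ [1])) ++ ((A ++ 1 :: A) ++ (A ++ ([1] ++ A))) from by
          rw [chaconWord_succ, ← hA]; simp,
          window_inner _ _ _ j L (by (try simp); omega) (by (try simp); omega)]
        exact (ih (j - (A ++ (A ++ [1])).length)).2 (by (try simp); omega)
      by_cases c4 : j + L ≤ 5 * A.length + 2
      · have hPj : 3 * A.length + 2 ≤ j := by omega
        rw [show chaconWord (n + k + 1) ++ 1 :: chaconWord (n + k + 1) =
            (A ++ (A ++ ([1] ++ (A ++ [1])))) ++ ((A ++ A) ++ ([1] ++ A)) from by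
          rw [chaconWord_succ, ← hA]; simp,
          window_inner _ _ _ j L (by (try simp); omega) (by (try simp); omega)]
        exact (ih (j - (A ++ (A ++ ([1] ++ (A ++ [1])))).length)).1 (by (try simp); omega)
      · have hPj : 4 * A.length + 2 ≤ j := by omega
        rw [show chaconWord (n + k + 1) ++ 1 :: chaconWord (n + k + 1) =
            (A ++ (A ++ ([1] ++ (A ++ ([1] ++ A))))) ++ ((A ++ 1 :: A) ++ []) from by
          rw [chaconWord_succ, ← hA]; simp,
          window_inner _ _ _ j L (by (try simp); omega) (by (try simp); omega)]
        exact (ih (j - (A ++ (A ++ ([1] ++ (A ++ ([1] ++ A))))).length)).2 (by (try simp); omega)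

lemma card_filter_range_eq_countP (n : ℕ) (p : ℕ → Prop) [DecidablePred p] :
    ((Finset.range n).filter p).card = (List.range n).countP (fun i => decide (p i)) := by
  induction n with
  | zero => simp
  | succ n ih =>
    rw [Finset.range_add_one, Finset.filter_insert, List.range_succ, List.countP_append]
    by_cases h : p n
    · rw [if_pos h, Finset.card_insert_of_notMem (by simp), ih]
      simp [h]
    · rw [if_neg h, ih]
      simp [h]

lemma countP_range_mism : ∀ (a b : List (Fin 2)),
    (List.range a.length).countP (fun i => decide (a.getD i 0 = 0 ∧ b.getD i 0 = 1)) =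
      mism a b := by
  intro a
  induction a with
  | nil => intro b; simp [mism]
  | cons x as ih =>
    intro b
    cases b with
    | nil =>
      rw [mism_nil]
      apply List.countP_eq_zero.2
      intro i _
      simp
    | cons y bs =>
      rw [List.length_cons, List.range_succ_eq_map, List.countP_cons, List.countP_map, mism_cons]
      have he : ((fun i => decide ((x :: as).getD i 0 = 0 ∧ (y :: bs).getD i 0 = 1)) ∘ (· + 1)) =
          fun i => decide (as.getD i 0 = 0 ∧ bs.getD i 0 = 1) := by
        funext i
        simp
      rw [he, ih bs]
      by_cases hxy : x = 0 ∧ y = 1 <;> simp [hxy] <;> omega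

lemma countP_range_zeros : ∀ (a : List (Fin 2)),
    (List.range a.length).countP (fun i => decide (a.getD i 0 = 0)) = a.count 0 := by
  intro a
  induction a with
  | nil => simp
  | cons x as ih =>
    rw [List.length_cons, List.range_succ_eq_map, List.countP_cons, List.countP_map]
    have he : ((fun i => decide ((x :: as).getD i 0 = 0)) ∘ (· + 1)) =
        fun i => decide (as.getD i 0 = 0) := by
      funext i
      simp [List.getD_cons_succ]
    rw [he, ih, List.count_cons]
    by_cases hx : x = 0 <;> simp [hx, List.getD_cons_zero]

lemma hamming0_eq (a b : List (Fin 2)) :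
    hamming0 a b = (mism a b : ℝ) / ((a.count 0 : ℕ) : ℝ) := by
  unfold hamming0
  rw [card_filter_range_eq_countP, card_filter_range_eq_countP,
    countP_range_mism, countP_range_zeros]

lemma chacon_zeros (n : ℕ) : (chaconWord n).count 0 = 3 ^ n := by
  induction n with
  | zero => rfl
  | succ n ih =>
    rw [chaconWord_succ, List.count_append, List.count_append, List.count_cons, ih]
    have : (3:ℕ) ^ (n + 1) = 3 * 3 ^ n := by ring
    simp [this]
    omega

lemma chaconWord_length_ge (m : ℕ) : m + 1 ≤ (chaconWord m).length := by
  induction m with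
  | zero => simp [chaconWord]
  | succ m ih => rw [chaconWord_length]; omega

lemma subword_eq_window (W : ℕ → Fin 2) (hW : IsChaconInfWord W) (j L m : ℕ)
    (hm : j + L ≤ (chaconWord m).length) :
    subword W j L = window (chaconWord m ++ chaconWord m) j L := by
  have hlen1 : (subword W j L).length = L := by simp [subword]
  have hlen2 : (window (chaconWord m ++ chaconWord m) j L).length = L := by
    simp [window]
    omega
  apply List.ext_getElem (by rw [hlen1, hlen2])
  intro i h1 h2
  have hiL : i < L := by rwa [hlen1] at h1
  have hjm : j + i < (chaconWord m).length := by omega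
  have e1 : (subword W j L)[i] = W (j + i) := by
    simp [subword]
  have e2 : (window (chaconWord m ++ chaconWord m) j L)[i] = (chaconWord m)[j + i] := by
    simp only [window]
    rw [List.getElem_take, List.getElem_drop]
    exact List.getElem_append_left hjm
  rw [e1, e2, hW m (j + i) hjm, List.getD_eq_getElem _ _ hjm]

theorem chacon_subword_far (W : ℕ → Fin 2) (hW : IsChaconInfWord W) (n j : ℕ)
    (hne : subword W j (chaconWord n).length ≠ chaconWord n) :
    hamming0 (chaconWord n) (subword W j (chaconWord n).length) > 1 / 6 := by
  have hm : j + (chaconWord n).length ≤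
      (chaconWord (n + (j + (chaconWord n).length))).length := by
    have := chaconWord_length_ge (n + (j + (chaconWord n).length))
    omega
  have hwin := subword_eq_window W hW j (chaconWord n).length _ hm
  have hfam : Fam n (subword W j (chaconWord n).length) := by
    rw [hwin]
    exact (structYZ n (j + (chaconWord n).length) j).1 (by omega)
  have hzpos : 0 < (3:ℕ) ^ n := by positivity
  rcases hfam with h | ⟨r, hr1, hr2, hwr⟩ | ⟨r, hr1, hr2, hwr⟩
  · exact absurd h hne
  · -- famA case; impossible for n = 0
    cases n with
    | zero => simp [chaconWord] at hr2; omega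
    | succ N =>
      have hg := (good_chacon N).1 r hr2 hr1
      rw [hwr, hamming0_eq, chacon_zeros]
      rw [gt_iff_lt, lt_div_iff₀ (by positivity)]
      have hnat : 3 ^ (N + 1) < 6 * mism (chaconWord (N + 1)) (famA (chaconWord (N + 1)) r) := by
        have := Tn_spec N
        omega
      have hcast : ((3:ℝ)) ^ (N + 1) <
          6 * (mism (chaconWord (N + 1)) (famA (chaconWord (N + 1)) r) : ℝ) := by
        exact_mod_cast hnat
      push_cast
      linarith
  · cases n with
    | zero =>
      have hr : r = 1 := by
        simp [chaconWord] at hr2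
        omega
      subst hr
      rw [hwr, hamming0_eq]
      have e1 : mism (chaconWord 0) (famB (chaconWord 0) 1) = 1 := rfl
      have e2 : (chaconWord 0).count 0 = 1 := rfl
      rw [e1, e2]
      norm_num
    | succ N =>
      have hg := (good_chacon N).2.1 r hr2 hr1
      rw [hwr, hamming0_eq, chacon_zeros]
      rw [gt_iff_lt, lt_div_iff₀ (by positivity)]
      have hnat : 3 ^ (N + 1) < 6 * mism (chaconWord (N + 1)) (famB (chaconWord (N + 1)) r) := by
        have := Tn_spec N
        omega
      have hcast : ((3:ℝ)) ^ (N + 1) <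
          6 * (mism (chaconWord (N + 1)) (famB (chaconWord (N + 1)) r) : ℝ) := by
        exact_mod_cast hnat
      push_cast
      linarith
end

section
/- For every n and every i with 0 < i < |Wₙ|, letting α denote the subword of W of length |Wₙ| beginning at position i, one has d(Wₙ, α) = (4·3ⁿ / (3^{n+1} − 1)) · d₀(Wₙ, α). -/
open Filter

/-! `Wₙ` has length `(3^{n+1} - 1)/2` and contains `3ⁿ` zeros. Since `W` starts with
`Wₙ Wₙ`, a window of length `|Wₙ|` starting at `i ≤ |Wₙ|` is a rotation of `Wₙ`, so it has as many
ones as `Wₙ`. Hence the positions where a `0` of `Wₙ` meets a `1` are exactly as many as those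
where a `1` meets a `0`, and `d = 2 · #{0 ↦ 1} / |Wₙ|` while `d₀ = #{0 ↦ 1} / 3ⁿ`. -/

open Finset

section BinaryCounting

variable {ι : Type*} (s : Finset ι) (f g : ι → Fin 2)

theorem card_filter_eq_zero_add_sum_val :
    #(s.filter fun j => f j = 0) + ∑ j ∈ s, (f j).val = #s := by
  rw [card_filter, ← sum_add_distrib, card_eq_sum_ones]
  exact sum_congr rfl fun j _ => by generalize f j = x; revert x; decide

theorem card_filter_ne_eq_two_mul_of_sum_val_eq
    (hsum : ∑ j ∈ s, (f j).val = ∑ j ∈ s, (g j).val) :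
    #(s.filter fun j => f j ≠ g j) = 2 * #(s.filter fun j => f j = 0 ∧ g j = 1) := by
  have hsplit : #(s.filter fun j => f j ≠ g j) =
      #(s.filter fun j => f j = 0 ∧ g j = 1) + #(s.filter fun j => f j = 1 ∧ g j = 0) := by
    simp only [card_filter, ← sum_add_distrib]
    exact sum_congr rfl fun j _ => by generalize f j = x; generalize g j = y; revert x y; decide
  have hbalance : #(s.filter fun j => f j = 0 ∧ g j = 1) + ∑ j ∈ s, (f j).val =
      #(s.filter fun j => f j = 1 ∧ g j = 0) + ∑ j ∈ s, (g j).val := by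
    simp only [card_filter, ← sum_add_distrib]
    exact sum_congr rfl fun j _ => by generalize f j = x; generalize g j = y; revert x y; decide
  omega

end BinaryCounting

theorem sum_range_add_eq_of_shift {M : Type*} [AddCancelCommMonoid M] (f : ℕ → M) {L i : ℕ}
    (hf : ∀ j < i, f (j + L) = f j) :
    ∑ k ∈ range L, f (i + k) = ∑ k ∈ range L, f k := by
  induction i with
  | zero => simp
  | succ i ih =>
    have hstep : f i + ∑ k ∈ range L, f (i + 1 + k) = f i + ∑ k ∈ range L, f (i + k) :=
      calc f i + ∑ k ∈ range L, f (i + 1 + k) = ∑ k ∈ range (L + 1), f (i + k) := by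
            rw [sum_range_succ', add_comm]; simp only [add_assoc, add_comm 1, add_zero]
        _ = ∑ k ∈ range L, f (i + k) + f (i + L) := sum_range_succ _ L
        _ = f i + ∑ k ∈ range L, f (i + k) := by rw [hf i (by omega), add_comm]
    rw [add_left_cancel hstep, ih fun j hj => hf j (by omega)]

theorem sum_range_getD {α M : Type*} [AddCommMonoid M] (l : List α) (d : α) (f : α → M) :
    ∑ j ∈ range l.length, f (l.getD j d) = (l.map f).sum := by
  induction l with
  | nil => simp
  | cons a t ih =>
    rw [List.length_cons, sum_range_succ', add_comm]
    simp only [List.getD_cons_succ, List.getD_cons_zero, ih, List.map_cons, List.sum_cons]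

theorem subword_getD (W : ℕ → Fin 2) {i L k : ℕ} (hk : k < L) :
    (subword W i L).getD k 0 = W (i + k) := by
  simp [subword, hk]

namespace chaconWord

theorem length_succ (n : ℕ) : (chaconWord (n + 1)).length = 3 * (chaconWord n).length + 1 := by
  simp [chaconWord]; ring

theorem two_mul_length_add_one (n : ℕ) : 2 * (chaconWord n).length + 1 = 3 ^ (n + 1) := by
  induction n with
  | zero => rfl
  | succ n ih => rw [length_succ, pow_succ]; omega

theorem two_mul_sum_val_add_one (n : ℕ) :
    2 * ∑ j ∈ range (chaconWord n).length, ((chaconWord n).getD j 0).val + 1 = 3 ^ n := by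
  rw [sum_range_getD]
  induction n with
  | zero => rfl
  | succ n ih =>
    simp only [chaconWord, List.map_append, List.sum_append, List.map_cons, List.map_nil,
      List.sum_cons, List.sum_nil, Fin.val_one] at ih ⊢
    omega

theorem card_filter_eq_zero (n : ℕ) :
    #((range (chaconWord n).length).filter fun j => (chaconWord n).getD j 0 = 0) = 3 ^ n := by
  have hsplit := card_filter_eq_zero_add_sum_val (range (chaconWord n).length)
    fun j => (chaconWord n).getD j 0
  have hlen := two_mul_length_add_one n
  have hones := two_mul_sum_val_add_one n
  rw [card_range] at hsplit
  rw [pow_succ] at hlen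
  omega

theorem getD_succ_add_length (n : ℕ) {j : ℕ} (hj : j < (chaconWord n).length) :
    (chaconWord (n + 1)).getD (j + (chaconWord n).length) 0 = (chaconWord n).getD j 0 := by
  simp only [chaconWord, List.append_assoc]
  rw [List.getD_append_right _ _ _ _ (by omega), List.getD_append _ _ _ _ (by omega),
    Nat.add_sub_cancel]

end chaconWord

namespace IsChaconInfWord

variable {W : ℕ → Fin 2} (hW : IsChaconInfWord W)
include hW

theorem add_length (n : ℕ) {j : ℕ} (hj : j < (chaconWord n).length) :
    W (j + (chaconWord n).length) = W j := by
  rw [hW (n + 1) _ (by rw [chaconWord.length_succ]; omega), chaconWord.getD_succ_add_length n hj,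
    hW n j hj]

theorem sum_val_window (n : ℕ) {i : ℕ} (hi : i ≤ (chaconWord n).length) :
    ∑ k ∈ range (chaconWord n).length, (W (i + k)).val =
      ∑ k ∈ range (chaconWord n).length, ((chaconWord n).getD k 0).val := by
  rw [sum_range_add_eq_of_shift (fun k => (W k).val) fun j hj =>
    congrArg Fin.val (hW.add_length n (hj.trans_le hi))]
  exact sum_congr rfl fun k hk => by rw [hW n k (mem_range.mp hk)]

end IsChaconInfWord

theorem chacon_hamming_eq_hamming0_general (W : ℕ → Fin 2) (hW : IsChaconInfWord W) (n i : ℕ)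
    (hin : i < (chaconWord n).length) :
    hamming (chaconWord n) (subword W i (chaconWord n).length) =
      4 * 3 ^ n / (3 ^ (n + 1) - 1) *
        hamming0 (chaconWord n) (subword W i (chaconWord n).length) := by
  set c := chaconWord n
  set α := subword W i c.length
  have hones : ∑ j ∈ range c.length, (c.getD j 0).val =
      ∑ j ∈ range c.length, (α.getD j 0).val := by
    rw [← hW.sum_val_window n hin.le]
    exact sum_congr rfl fun j hj => by rw [subword_getD W (mem_range.mp hj)]
  have hlen : (2 : ℝ) * c.length = 3 ^ (n + 1) - 1 := by
    rw [eq_sub_iff_add_eq]; exact_mod_cast chaconWord.two_mul_length_add_one n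
  unfold hamming hamming0
  rw [card_filter_ne_eq_two_mul_of_sum_val_eq _ _ _ hones, chaconWord.card_filter_eq_zero n,
    ← hlen]
  push_cast
  field_simp
  ring

theorem chacon_hamming_eq_hamming0 (W : ℕ → Fin 2) (hW : IsChaconInfWord W) (n i : ℕ)
    (hi0 : 0 < i) (hin : i < (chaconWord n).length) :
    hamming (chaconWord n) (subword W i (chaconWord n).length) =
      4 * 3 ^ n / (3 ^ (n + 1) - 1) *
        hamming0 (chaconWord n) (subword W i (chaconWord n).length) :=
  chacon_hamming_eq_hamming0_general W hW n i hin
end
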